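/- arXiv:2012.09437 — 3 statements merged into one kernel-verified Lean document; each statement's English description precedes it below -/
import Mathlib

section
/- Under Assumptions 1–5, for every z ∈ 𝒰̄ \ {z̲₁, …, z̲_K}, the matrix 𝕄(z) has no eigenvalue on 𝕊¹, exactly r eigenvalues (counted with algebraic multiplicity) in 𝔻 \ {0}, and exactly p eigenvalues in 𝒰. -/
open scoped Classical
open Complex Filter Asymptotics Metric

noncomputable section

set_option autoImplicit false

/-- the space `ℓ²(ℤ;ℂ)` -/
abbrev Seq2 : Type := lp (fun _ : ℤ => ℂ) 2

/-- the action of the convolution operator with coefficients `a` supported in `{-r, …, p}`: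
`(Q u)_j = ∑_{ℓ=-r}^p a_ℓ u_{j+ℓ}`. -/
def convAct (r p : ℕ) (a : ℤ → ℂ) (u : ℤ → ℂ) (j : ℤ) : ℂ :=
  ∑ ℓ ∈ Finset.Icc (-(r : ℤ)) (p : ℤ), a ℓ * u (j + ℓ)

/-- the symbol `Q̂(κ) = ∑_{ℓ=-r}^p a_ℓ κ^ℓ`. -/
def symbol (r p : ℕ) (a : ℤ → ℂ) (κ : ℂ) : ℂ :=
  ∑ ℓ ∈ Finset.Icc (-(r : ℤ)) (p : ℤ), a ℓ * κ ^ ℓ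

/-- the symbol `F = Q̂₀ / Q̂₁` of the operator `ℒ = Q₁⁻¹ Q₀`. -/
def Fsym (r p : ℕ) (a0 a1 : ℤ → ℂ) (κ : ℂ) : ℂ :=
  symbol r p a0 κ / symbol r p a1 κ

/-- `𝔸_ℓ(z) = z a_{ℓ,1} - a_{ℓ,0}`. -/
def Acoef (a0 a1 : ℤ → ℂ) (ℓ : ℤ) (z : ℂ) : ℂ := z * a1 ℓ - a0 ℓ

/-- the companion-type matrix `𝕄(z) ∈ M_{p+r}(ℂ)`: first row
`(-𝔸_{p-1}(z)/𝔸_p(z), …, -𝔸_{-r}(z)/𝔸_p(z))`, ones on the subdiagonal, zeros elsewhere. -/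
def Mmat (r p : ℕ) (a0 a1 : ℤ → ℂ) (z : ℂ) : Matrix (Fin (p + r)) (Fin (p + r)) ℂ :=
  fun i j =>
    if (i : ℕ) = 0 then - Acoef a0 a1 ((p : ℤ) - 1 - (j : ℕ)) z / Acoef a0 a1 (p : ℤ) z
    else if (i : ℕ) = (j : ℕ) + 1 then 1 else 0

/-- the discrete Dirac mass `δ ∈ ℓ²(ℤ;ℂ)`. -/
def dirac : Seq2 := lp.single 2 (0 : ℤ) (1 : ℂ)

/-- The full set of data and assumptions (Assumptions 1–5) of the paper. -/
structure Setup where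
  r : ℕ
  p : ℕ
  hrp : 1 ≤ p + r
  a0 : ℤ → ℂ
  a1 : ℤ → ℂ
  K : ℕ
  hK : 1 ≤ K
  /-- the tangency points `κ̲₁, …, κ̲_K` on the unit circle -/
  kap : Fin K → ℂ
  /-- the drifts `α_k` -/
  α : Fin K → ℝ
  /-- the diffusion coefficients `β_k` -/
  β : Fin K → ℝ
  /-- the integers `μ_k` (the order of tangency is `2 μ_k`) -/
  μ : Fin K → ℕ
  /-- the operator `ℒ = Q₁⁻¹ Q₀` acting on `ℓ²(ℤ;ℂ)` -/
  L : Seq2 →L[ℂ] Seq2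
  /-- Assumption 1: the symbol of `Q₁` does not vanish on the unit circle -/
  hQ1_ne : ∀ κ : ℂ, ‖κ‖ = 1 → symbol r p a1 κ ≠ 0
  /-- Assumption 1: the index condition -/
  hQ1_index :
    (2 * (Real.pi : ℂ) * Complex.I)⁻¹ *
      (∮ κ in C(0, 1), deriv (symbol r p a1) κ / symbol r p a1 κ) = 0
  /-- `ℒ` is characterized by `Q₁ ∘ ℒ = Q₀` -/
  hL : ∀ (u : Seq2) (j : ℤ),
    convAct r p a1 (fun i => L u i) j = convAct r p a0 (fun i => u i) j
  /-- Assumption 2: the `κ̲_k` are distinct points of the unit circle -/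
  hkap_unit : ∀ k, ‖kap k‖ = 1
  hkap_inj : Function.Injective kap
  /-- Assumption 2: `|F| < 1` away from the `κ̲_k` -/
  hF_lt : ∀ κ : ℂ, ‖κ‖ = 1 → (∀ k, κ ≠ kap k) → ‖Fsym r p a0 a1 κ‖ < 1
  /-- Assumption 2: `F(κ̲_k) ∈ 𝕊¹` -/
  hF_unit : ∀ k, ‖Fsym r p a0 a1 (kap k)‖ = 1
  hα : ∀ k, α k ≠ 0
  hβ : ∀ k, 0 < β k
  hμ : ∀ k, 1 ≤ μ k
  /-- Assumption 2: local expansion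
  `F(κ̲_k e^{iξ})/F(κ̲_k) = exp(-i α_k ξ - β_k ξ^{2μ_k} + O(ξ^{2μ_k+1}))` as `ξ → 0` -/
  hexp : ∀ k, ∃ g : ℝ → ℂ,
    (g =O[nhds 0] fun ξ : ℝ => ξ ^ (2 * μ k + 1)) ∧
    ∀ᶠ ξ : ℝ in nhds 0,
      Fsym r p a0 a1 (kap k * Complex.exp (Complex.I * ξ)) / Fsym r p a0 a1 (kap k)
        = Complex.exp (-(Complex.I) * (α k : ℂ) * (ξ : ℂ)
            - (β k : ℂ) * (ξ : ℂ) ^ (2 * μ k) + g ξ)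
  /-- Assumption 3: `𝔸_{-r}` and `𝔸_p` do not vanish on `𝒰̄` -/
  hA : ∀ z : ℂ, 1 ≤ ‖z‖ → Acoef a0 a1 (-(r : ℤ)) z ≠ 0 ∧ Acoef a0 a1 (p : ℤ) z ≠ 0
  /-- Assumption 4: either `Q₁` is the identity, or `a_{-r,1} ≠ 0` and `a_{p,1} ≠ 0` -/
  hQ1' : (∀ ℓ ∈ Finset.Icc (-(r : ℤ)) (p : ℤ), a1 ℓ = if ℓ = 0 then 1 else 0) ∨
    (a1 (-(r : ℤ)) ≠ 0 ∧ a1 (p : ℤ) ≠ 0)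
  /-- Assumption 5: each `ℐ_k` has one or two elements -/
  h5card : ∀ k : Fin K,
    (Finset.univ.filter fun ν =>
      Fsym r p a0 a1 (kap ν) = Fsym r p a0 a1 (kap k)).card ≤ 2
  /-- Assumption 5: when `ℐ_k` has two elements, the corresponding drifts have opposite signs -/
  h5sign : ∀ k ν₁ ν₂ : Fin K,
    Fsym r p a0 a1 (kap ν₁) = Fsym r p a0 a1 (kap k) →
    Fsym r p a0 a1 (kap ν₂) = Fsym r p a0 a1 (kap k) →
    ν₁ ≠ ν₂ → α ν₁ * α ν₂ < 0

/-- the symbol `F` of `ℒ` -/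
def Setup.F (S : Setup) : ℂ → ℂ := Fsym S.r S.p S.a0 S.a1

/-- the tangency points `z̲_k = F(κ̲_k)` of the spectrum of `ℒ` with the unit circle -/
def Setup.zK (S : Setup) (k : Fin S.K) : ℂ := S.F (S.kap k)

/-- the matrix `𝕄(z)` -/
def Setup.M (S : Setup) (z : ℂ) : Matrix (Fin (S.p + S.r)) (Fin (S.p + S.r)) ℂ :=
  Mmat S.r S.p S.a0 S.a1 z

namespace SpecAux

open Polynomial

/-- the polynomial with coefficients `b 0, …, b (n-1)` -/
def polyOf (n : ℕ) (b : ℕ → ℂ) : Polynomial ℂ :=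
  ∑ i ∈ Finset.range n, C (b i) * X ^ i

lemma polyOf_eval (n : ℕ) (b : ℕ → ℂ) (κ : ℂ) :
    (polyOf n b).eval κ = ∑ i ∈ Finset.range n, b i * κ ^ i := by
  simp [polyOf, eval_finset_sum]

lemma polyOf_derivative_eval (n : ℕ) (b : ℕ → ℂ) (κ : ℂ) :
    (polyOf n b).derivative.eval κ = ∑ i ∈ Finset.range n, b i * (i * κ ^ (i - 1)) := by
  simp [polyOf, derivative_sum, derivative_C_mul, eval_finset_sum, mul_assoc, derivative_X_pow]

lemma polyOf_smul (n : ℕ) (b : ℕ → ℂ) (a : ℂ) :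
    polyOf n (fun i => a * b i) = C a * polyOf n b := by
  simp [polyOf, Finset.mul_sum, mul_assoc, map_mul]

/-- the number of roots (with multiplicity) in the open unit disc -/
def inCount (q : Polynomial ℂ) : ℕ := (q.roots.filter fun κ => ‖κ‖ < 1).card

lemma eval_eq_prod (q : Polynomial ℂ) (y : ℂ) :
    q.eval y = q.leadingCoeff * ∏ i : Fin q.roots.toList.length, (y - q.roots.toList.get i) := by
  have hsplit : Splits q := IsAlgClosed.splits q
  have hfact := hsplit.eq_prod_roots
  conv_lhs => rw [hfact]
  rw [eval_mul, eval_C]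
  congr 1
  rw [eval_multiset_prod]
  have h1 : (q.roots.map fun a => X - C a).map (eval y) = q.roots.map fun a => y - a := by
    rw [Multiset.map_map]; simp
  rw [h1]
  have h2 : q.roots = (q.roots.toList : Multiset ℂ) := (Multiset.coe_toList _).symm
  conv_lhs => rw [h2]
  rw [Multiset.map_coe, Multiset.prod_coe]
  have h3 : q.roots.toList.map (fun a => y - a)
      = List.ofFn (fun i => y - q.roots.toList.get i) := by
    conv_lhs => rw [← List.ofFn_get q.roots.toList]
    rw [List.map_ofFn]; rfl
  rw [h3, List.prod_ofFn]

lemma logderiv_sum (q : Polynomial ℂ) (hq : q ≠ 0) {κ : ℂ} (hκ : q.eval κ ≠ 0) :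
    q.derivative.eval κ / q.eval κ
      = ∑ i : Fin q.roots.toList.length, (κ - q.roots.toList.get i)⁻¹ := by
  set l := q.roots.toList with hl
  have hfac : ∀ y : ℂ, q.eval y = q.leadingCoeff * ∏ i : Fin l.length, (y - l.get i) :=
    fun y => eval_eq_prod q y
  have hlc : q.leadingCoeff ≠ 0 := leadingCoeff_ne_zero.2 hq
  have hne : ∀ i : Fin l.length, κ - l.get i ≠ 0 := by
    intro i h
    apply hκ
    rw [hfac κ, Finset.prod_eq_zero (Finset.mem_univ i) h, mul_zero]
  have hfun : (fun y => q.eval y)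
      = fun y => q.leadingCoeff * ∏ i : Fin l.length, (y - l.get i) := funext hfac
  have hld : logDeriv (fun y => q.eval y) κ = ∑ i : Fin l.length, (κ - l.get i)⁻¹ := by
    rw [hfun, logDeriv_const_mul _ _ hlc, logDeriv_prod]
    · refine Finset.sum_congr rfl fun i _ => ?_
      rw [logDeriv_apply]
      have : deriv (fun y : ℂ => y - l.get i) κ = 1 := by
        simp [deriv_sub_const]
      rw [this, one_div]
    · intro i _; exact hne i
    · intro i _; exact (differentiable_id.sub_const _).differentiableAt
  rw [← hld, logDeriv_apply, Polynomial.deriv]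

lemma circle_int_mem {a : ℂ} (h : ‖a‖ < 1) :
    (∮ κ in C(0, 1), (κ - a)⁻¹) = 2 * (Real.pi : ℂ) * Complex.I := by
  have : a ∈ Metric.ball (0 : ℂ) 1 := by simpa [Metric.mem_ball, dist_zero_right] using h
  simpa using circleIntegral.integral_sub_inv_of_mem_ball this

lemma circle_int_out {a : ℂ} (h : 1 < ‖a‖) :
    (∮ κ in C(0, 1), (κ - a)⁻¹) = 0 := by
  have hne : ∀ w : ℂ, ‖w‖ ≤ 1 → w - a ≠ 0 := by
    intro w hw hwa
    rw [sub_eq_zero] at hwa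
    rw [hwa] at hw
    linarith
  apply Complex.circleIntegral_eq_zero_of_differentiable_on_off_countable zero_le_one
    (Set.countable_empty) ?_ ?_
  · apply ContinuousOn.inv₀ (continuousOn_id.sub continuousOn_const)
    intro w hw
    exact hne w (by simpa [Metric.mem_closedBall, dist_zero_right] using hw)
  · intro w hw
    refine DifferentiableAt.inv ((differentiable_id.sub_const a).differentiableAt) ?_
    exact hne w (le_of_lt (by simpa [Metric.mem_ball, dist_zero_right] using hw.1))

lemma sum_ite_card (l : List ℂ) (P : ℂ → Prop) (c : ℂ) :
    (∑ i : Fin l.length, if P (l.get i) then c else 0)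
      = (((l : Multiset ℂ).filter P).card : ℂ) * c := by
  induction l with
  | nil => simp
  | cons a t ih =>
    simp only [List.length_cons]
    rw [Fin.sum_univ_succ]
    have hgs : ∀ i : Fin t.length, (a :: t).get i.succ = t.get i := fun i => rfl
    simp only [List.get_cons_zero, hgs]
    have hco : ((a :: t : List ℂ) : Multiset ℂ) = a ::ₘ (t : Multiset ℂ) := rfl
    show (if P a then c else 0) + (∑ i : Fin t.length, if P (t.get i) then c else 0) = _
    by_cases hP : P a
    · rw [if_pos hP, hco, Multiset.filter_cons_of_pos _ hP]
      push_cast [Multiset.card_cons]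
      rw [ih]; push_cast; ring
    · rw [if_neg hP, hco, Multiset.filter_cons_of_neg _ hP, ih]
      ring

lemma argument_principle (q : Polynomial ℂ) (h : ∀ κ : ℂ, ‖κ‖ = 1 → q.eval κ ≠ 0) :
    (∮ κ in C(0, 1), q.derivative.eval κ / q.eval κ)
      = 2 * (Real.pi : ℂ) * Complex.I * (inCount q : ℂ) := by
  have hq : q ≠ 0 := fun h0 => h 1 (by norm_num) (by simp [h0])
  set l := q.roots.toList with hl
  have hmem : ∀ i : Fin l.length, l.get i ∈ q.roots := by
    intro i
    rw [← Multiset.mem_toList]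
    exact l.get_mem i
  have hroot_ne : ∀ i : Fin l.length, ‖l.get i‖ ≠ 1 := by
    intro i h1
    exact h _ h1 ((mem_roots hq).1 (hmem i))
  have heq : Set.EqOn (fun κ => q.derivative.eval κ / q.eval κ)
      (fun κ => ∑ i : Fin l.length, (κ - l.get i)⁻¹) (Metric.sphere 0 1) := by
    intro κ hκ
    exact logderiv_sum q hq (h κ (by simpa [mem_sphere_zero_iff_norm] using hκ))
  rw [circleIntegral.integral_congr zero_le_one heq]
  have hcne : ∀ (i : Fin l.length) (θ : ℝ), circleMap 0 1 θ - l.get i ≠ 0 := by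
    intro i θ hc
    rw [sub_eq_zero] at hc
    apply hroot_ne i
    rw [← hc, norm_circleMap_zero]
    norm_num
  have hswap : (∮ κ in C(0, 1), ∑ i : Fin l.length, (κ - l.get i)⁻¹)
      = ∑ i : Fin l.length, ∮ κ in C(0, 1), (κ - l.get i)⁻¹ := by
    simp only [circleIntegral]
    rw [← intervalIntegral.integral_finset_sum]
    · congr 1
      funext θ
      rw [Finset.smul_sum]
    · intro i _
      apply Continuous.intervalIntegrable
      simp only [deriv_circleMap]; exact
        (((continuous_circleMap 0 1).mul continuous_const).smul
          (((continuous_circleMap 0 1).sub continuous_const).inv₀ (hcne i)))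
  rw [hswap]
  have hval : ∀ i : Fin l.length, (∮ κ in C(0, 1), (κ - l.get i)⁻¹)
      = if ‖l.get i‖ < 1 then 2 * (Real.pi : ℂ) * Complex.I else 0 := by
    intro i
    rcases (hroot_ne i).lt_or_gt with h' | h'
    · rw [if_pos h', circle_int_mem h']
    · rw [if_neg (not_lt.2 h'.le), circle_int_out h']
  calc (∑ i : Fin l.length, ∮ κ in C(0, 1), (κ - l.get i)⁻¹)
      = ∑ i : Fin l.length, if ‖l.get i‖ < 1 then 2 * (Real.pi : ℂ) * Complex.I else 0 :=
        Finset.sum_congr rfl fun i _ => hval i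
    _ = (((l : Multiset ℂ).filter (fun κ => ‖κ‖ < 1)).card : ℂ)
          * (2 * (Real.pi : ℂ) * Complex.I) :=
          sum_ite_card l (fun κ => ‖κ‖ < 1) (2 * (Real.pi : ℂ) * Complex.I)
    _ = 2 * (Real.pi : ℂ) * Complex.I * (inCount q : ℂ) := by
        rw [inCount, hl, Multiset.coe_toList]
        ring

lemma nat_cast_eq_of_dist_lt {m k : ℕ} (h : dist ((m : ℂ)) ((k : ℂ)) < 1) : m = k := by
  rw [Complex.dist_eq] at h
  have h2 : ((m : ℂ)) - ((k : ℂ)) = (((m : ℝ) - (k : ℝ) : ℝ) : ℂ) := by push_cast; ring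
  rw [h2, Complex.norm_real, Real.norm_eq_abs] at h
  have h3 := abs_sub_lt_iff.1 h
  have h4 : (m : ℝ) < (k : ℝ) + 1 := by linarith [h3.1]
  have h5 : (k : ℝ) < (m : ℝ) + 1 := by linarith [h3.2]
  have h6 : m < k + 1 := by exact_mod_cast h4
  have h7 : k < m + 1 := by exact_mod_cast h5
  omega

lemma two_pi_I_ne : (2 * (Real.pi : ℂ) * Complex.I) ≠ 0 :=
  mul_ne_zero (mul_ne_zero two_ne_zero (Complex.ofReal_ne_zero.2 Real.pi_ne_zero))
    Complex.I_ne_zero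

lemma count_eventually_const {X : Type*} [TopologicalSpace X] (n : ℕ) (b : ℕ → X → ℂ)
    (hb : ∀ i, Continuous (b i)) (x₀ : X)
    (h0 : ∀ κ : ℂ, ‖κ‖ = 1 → (polyOf n (fun i => b i x₀)).eval κ ≠ 0) :
    ∀ᶠ x in nhds x₀,
      inCount (polyOf n (fun i => b i x)) = inCount (polyOf n (fun i => b i x₀)) := by
  classical
  set E : X × ℂ → ℂ := fun q => ∑ i ∈ Finset.range n, b i q.1 * q.2 ^ i with hE
  set D : X × ℂ → ℂ := fun q => ∑ i ∈ Finset.range n, b i q.1 * (i * q.2 ^ (i - 1)) with hD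
  have hEc : Continuous E := continuous_finset_sum _ fun i _ =>
    ((hb i).comp continuous_fst).mul (continuous_snd.pow i)
  have hDc : Continuous D := continuous_finset_sum _ fun i _ =>
    ((hb i).comp continuous_fst).mul (continuous_const.mul (continuous_snd.pow (i - 1)))
  have hopen : IsOpen {q : X × ℂ | E q ≠ 0} := isOpen_compl_singleton.preimage hEc
  have hincl : ({x₀} : Set X) ×ˢ Metric.sphere (0 : ℂ) 1 ⊆ {q : X × ℂ | E q ≠ 0} := by
    rintro ⟨x, κ⟩ ⟨hx, hκ⟩
    rcases hx with rfl
    have := h0 κ (by simpa [mem_sphere_zero_iff_norm] using hκ)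
    rw [polyOf_eval] at this
    exact this
  obtain ⟨u, v, hu, hv, hsu, hsv, huv⟩ := generalized_tube_lemma isCompact_singleton
    (isCompact_sphere (0 : ℂ) 1) hopen hincl
  have hx₀u : x₀ ∈ u := hsu rfl
  have hVne : ∀ x ∈ u, ∀ κ ∈ Metric.sphere (0 : ℂ) 1, E (x, κ) ≠ 0 := fun x hx κ hκ =>
    huv ⟨hx, hsv hκ⟩
  set cnt : X → ℕ := fun x => inCount (polyOf n (fun i => b i x)) with hcnt
  have key : ∀ x ∈ u, (2 * (Real.pi : ℂ) * Complex.I) * (cnt x : ℂ)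
      = ∮ κ in C(0, 1), D (x, κ) / E (x, κ) := by
    intro x hx
    have harg := argument_principle (polyOf n (fun i => b i x)) (fun κ hκ => by
      rw [polyOf_eval]
      exact hVne x hx κ (by simpa [mem_sphere_zero_iff_norm] using hκ))
    have hfeq : (fun κ => (polyOf n (fun i => b i x)).derivative.eval κ
        / (polyOf n (fun i => b i x)).eval κ) = fun κ => D (x, κ) / E (x, κ) := by
      funext κ
      rw [polyOf_eval, polyOf_derivative_eval]
    rw [hfeq] at harg
    rw [← harg]
  have circ_eq : ∀ x : X, (∮ κ in C(0, 1), D (x, κ) / E (x, κ))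
      = ∫ t in (0 : ℝ)..(2 * Real.pi),
          (circleMap 0 1 t * Complex.I) * (D (x, circleMap 0 1 t) / E (x, circleMap 0 1 t)) := by
    intro x
    simp only [circleIntegral, deriv_circleMap, smul_eq_mul]
  have hm : Continuous fun q : u × ℝ => (((q.1 : X), circleMap 0 1 q.2) : X × ℂ) :=
    (continuous_subtype_val.comp continuous_fst).prodMk
      ((continuous_circleMap 0 1).comp continuous_snd)
  have hgc : Continuous (Function.uncurry fun (y : u) (t : ℝ) =>
      (circleMap 0 1 t * Complex.I) * (D ((y : X), circleMap 0 1 t) / E ((y : X), circleMap 0 1 t))) := by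
    refine Continuous.mul ?_ ?_
    · exact ((continuous_circleMap 0 1).comp continuous_snd).mul continuous_const
    · refine (hDc.comp hm).div (hEc.comp hm) ?_
      rintro ⟨y, t⟩
      exact hVne _ y.2 _ (circleMap_mem_sphere 0 zero_le_one t)
  have cont : Continuous fun y : u => ∫ t in (0 : ℝ)..(2 * Real.pi),
      (circleMap 0 1 t * Complex.I) * (D ((y : X), circleMap 0 1 t) / E ((y : X), circleMap 0 1 t)) :=
    intervalIntegral.continuous_parametric_intervalIntegral_of_continuous' hgc 0 (2 * Real.pi)
  have cntcont : Continuous fun y : u => ((cnt (y : X) : ℂ)) := by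
    have hfe : (fun y : u => ((cnt (y : X) : ℂ)))
        = fun y : u => (2 * (Real.pi : ℂ) * Complex.I)⁻¹ * ∫ t in (0 : ℝ)..(2 * Real.pi),
            (circleMap 0 1 t * Complex.I)
              * (D ((y : X), circleMap 0 1 t) / E ((y : X), circleMap 0 1 t)) := by
      funext y
      rw [← circ_eq (y : X), ← key (y : X) y.2, inv_mul_cancel_left₀ two_pi_I_ne]
    rw [hfe]
    exact continuous_const.mul cont
  set v₀ : u := ⟨x₀, hx₀u⟩ with hv₀
  have htd : Filter.Tendsto (fun y : u => ((cnt (y : X) : ℂ))) (nhds v₀)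
      (nhds ((cnt x₀ : ℂ))) := cntcont.continuousAt
  have hev : ∀ᶠ y : u in nhds v₀, dist ((cnt (y : X) : ℂ)) ((cnt x₀ : ℂ)) < 1 :=
    Metric.tendsto_nhds.mp htd 1 one_pos
  have hev' : ∀ᶠ y : u in nhds v₀, cnt (y : X) = cnt x₀ := by
    filter_upwards [hev] with y hy using nat_cast_eq_of_dist_lt hy
  rw [nhds_subtype_eq_comap, Filter.eventually_comap] at hev'
  filter_upwards [hev', hu.mem_nhds hx₀u] with x hxs hxu
  exact hxs ⟨x, hxu⟩ rfl

lemma loc_const {X : Type*} [TopologicalSpace X] (f : X → ℕ) {S : Set X}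
    (hS : IsPreconnected S) (h : ∀ x ∈ S, ∀ᶠ y in nhds x, f y = f x)
    {a b : X} (ha : a ∈ S) (hb : b ∈ S) : f a = f b := by
  by_contra hne
  set U : Set X := interior {x | f x = f a} with hU
  set W : Set X := ⋃ c ∈ ({f a}ᶜ : Set ℕ), interior {x | f x = c} with hW
  have hUo : IsOpen U := isOpen_interior
  have hWo : IsOpen W := isOpen_biUnion fun _ _ => isOpen_interior
  have hmemU : ∀ x ∈ S, f x = f a → x ∈ U := by
    intro x hx he
    rw [hU, mem_interior_iff_mem_nhds]
    filter_upwards [h x hx] with y hy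
    exact hy.trans he
  have hmemW : ∀ x ∈ S, f x ≠ f a → x ∈ W := by
    intro x hx he
    refine Set.mem_biUnion (Set.mem_compl_singleton_iff.2 he) ?_
    rw [mem_interior_iff_mem_nhds]
    filter_upwards [h x hx] with y hy
    exact hy
  have hcover : S ⊆ U ∪ W := by
    intro x hx
    rcases eq_or_ne (f x) (f a) with he | he
    · exact Or.inl (hmemU x hx he)
    · exact Or.inr (hmemW x hx he)
  obtain ⟨y, hyS, hyU, hyW⟩ := hS U W hUo hWo hcover ⟨a, ha, hmemU a ha rfl⟩
    ⟨b, hb, hmemW b hb (fun hh => hne hh.symm)⟩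
  have h1 : y ∈ {x | f x = f a} := interior_subset hyU
  obtain ⟨c, hc, hyc⟩ := Set.mem_iUnion₂.1 hyW
  have h2 : y ∈ {x | f x = c} := interior_subset hyc
  have h1' : f y = f a := h1
  have h2' : f y = c := h2
  exact Set.mem_compl_singleton_iff.1 hc (h2' ▸ h1' ▸ rfl)

lemma preconn_ext : IsPreconnected {z : ℂ | 1 < ‖z‖} := by
  have h1 : {z : ℂ | 1 < ‖z‖} = Complex.exp '' {w : ℂ | 0 < w.re} := by
    ext z
    simp only [Set.mem_setOf_eq, Set.mem_image]
    constructor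
    · intro hz
      have hz0 : z ≠ 0 := by
        intro h0
        rw [h0, norm_zero] at hz
        linarith
      refine ⟨Complex.log z, ?_, Complex.exp_log hz0⟩
      rw [Complex.log_re]
      exact Real.log_pos hz
    · rintro ⟨w, hw, rfl⟩
      rw [Complex.norm_exp]
      rw [show (1 : ℝ) = Real.exp 0 from (Real.exp_zero).symm]
      exact Real.exp_lt_exp.2 hw
  rw [h1]
  exact ((convex_halfSpace_re_gt (0 : ℝ)).isPreconnected).image _
    Complex.continuous_exp.continuousOn

lemma mem_closure_ext {z : ℂ} (hz : 1 ≤ ‖z‖) : z ∈ closure {w : ℂ | 1 < ‖w‖} := by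
  have htt : Filter.Tendsto (fun t : ℝ => (t : ℂ) * z) (nhdsWithin 1 (Set.Ioi 1)) (nhds z) := by
    have h2 : Filter.Tendsto (fun t : ℝ => (t : ℂ) * z) (nhds 1) (nhds ((1 : ℝ) * z : ℂ)) :=
      (Complex.continuous_ofReal.tendsto 1).mul_const z
    simpa using h2.mono_left nhdsWithin_le_nhds
  refine mem_closure_of_tendsto htt ?_
  filter_upwards [self_mem_nhdsWithin] with t ht
  have ht1 : (1 : ℝ) < t := ht
  have hnt : ‖(t : ℂ)‖ = t := by
    rw [Complex.norm_real]
    exact abs_of_pos (lt_trans one_pos ht1)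
  simp only [Set.mem_setOf_eq, norm_mul, hnt]
  nlinarith

lemma preconn_sandwich {T : Set ℂ} (h1 : {z : ℂ | 1 < ‖z‖} ⊆ T) (h2 : ∀ z ∈ T, 1 ≤ ‖z‖) :
    IsPreconnected T :=
  preconn_ext.subset_closure h1 (fun z hz => mem_closure_ext (h2 z hz))

lemma comp_det : ∀ (n : ℕ) (w : Fin n → ℂ) (x : ℂ),
    Matrix.det (Matrix.of (fun i j : Fin n =>
      (if i = j then x else 0)
        - (if (i : ℕ) = 0 then w j else if (i : ℕ) = (j : ℕ) + 1 then 1 else 0)))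
    = x ^ n - ∑ j : Fin n, w j * x ^ (n - 1 - (j : ℕ)) := by
  intro n
  induction n with
  | zero => intro w x; simp
  | succ n ih =>
    intro w x
    set A := Matrix.of (fun i j : Fin (n + 1) =>
      (if i = j then x else 0)
        - (if (i : ℕ) = 0 then w j else if (i : ℕ) = (j : ℕ) + 1 then 1 else 0)) with hA
    rcases Nat.eq_zero_or_pos n with rfl | hn
    · rw [Matrix.det_fin_one]
      simp [hA]
    · have hlast_ne : (0 : Fin (n + 1)) ≠ Fin.last n := by
        intro h
        have := congrArg Fin.val h
        simp only [Fin.val_zero, Fin.val_last] at this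
        omega
    -- expansion along the last column
      rw [Matrix.det_succ_column A (Fin.last n)]
      have hvanish : ∀ i ∈ Finset.univ, i ∉ ({0, Fin.last n} : Finset (Fin (n + 1))) →
          (-1 : ℂ) ^ ((i : ℕ) + ((Fin.last n : Fin (n + 1)) : ℕ)) * A i (Fin.last n)
            * (A.submatrix i.succAbove (Fin.last n).succAbove).det = 0 := by
        intro i _ hi
        simp only [Finset.mem_insert, Finset.mem_singleton] at hi
        push_neg at hi
        have hi0 : (i : ℕ) ≠ 0 := by
          intro h
          exact hi.1 (Fin.ext h)
        have hin : (i : ℕ) ≠ ((Fin.last n : Fin (n + 1)) : ℕ) + 1 := by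
          have := i.isLt
          simp only [Fin.val_last]
          omega
        have h1 : A i (Fin.last n) = 0 := by
          simp only [hA, Matrix.of_apply]
          rw [if_neg hi.2, if_neg hi0, if_neg hin, sub_zero]
        rw [h1]
        ring
      rw [← Finset.sum_subset (Finset.subset_univ ({0, Fin.last n} : Finset (Fin (n + 1))))
        hvanish]
      rw [Finset.sum_pair hlast_ne]
      -- last diagonal term
      have hAll : A (Fin.last n) (Fin.last n) = x := by
        simp [hA, Fin.val_last, hn.ne']
      have hA0l : A 0 (Fin.last n) = - w (Fin.last n) := by
        simp [hA, hlast_ne, Fin.val_last, hn.ne']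
      -- the submatrix for the last row
      have hsub1 : (A.submatrix (Fin.last n).succAbove (Fin.last n).succAbove).det
          = x ^ n - ∑ j : Fin n, w j.castSucc * x ^ (n - 1 - (j : ℕ)) := by
        rw [Fin.succAbove_last]
        have he : A.submatrix Fin.castSucc Fin.castSucc
            = Matrix.of (fun i j : Fin n =>
              (if i = j then x else 0)
                - (if (i : ℕ) = 0 then w j.castSucc
                    else if (i : ℕ) = (j : ℕ) + 1 then 1 else 0)) := by
          ext i j
          simp only [Matrix.submatrix_apply, hA, Matrix.of_apply, Fin.castSucc_inj,
            Fin.coe_castSucc]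
        rw [he, ih (fun j => w j.castSucc) x]
      -- the submatrix for the first row
      have hsub0 : (A.submatrix (0 : Fin (n + 1)).succAbove (Fin.last n).succAbove).det
          = (-1 : ℂ) ^ n := by
        rw [Fin.succAbove_zero, Fin.succAbove_last]
        have htri : (A.submatrix Fin.succ Fin.castSucc).BlockTriangular id := by
          intro i j hij
          simp only [Matrix.submatrix_apply, hA, Matrix.of_apply]
          have h1 : ¬(Fin.succ i = Fin.castSucc j) := by
            intro h
            have := congrArg Fin.val h
            simp only [Fin.val_succ, Fin.coe_castSucc] at this
            simp only [id] at hij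
            omega
          have h2 : ((Fin.succ i : Fin (n + 1)) : ℕ) ≠ 0 := by simp
          have h3 : ((Fin.succ i : Fin (n + 1)) : ℕ) ≠ ((Fin.castSucc j : Fin (n + 1)) : ℕ) + 1 := by
            simp only [Fin.val_succ, Fin.coe_castSucc]
            simp only [id] at hij
            omega
          rw [if_neg h1, if_neg h2, if_neg h3, sub_zero]
        rw [Matrix.det_of_upperTriangular htri]
        have hdiag : ∀ i : Fin n, (A.submatrix Fin.succ Fin.castSucc) i i = -1 := by
          intro i
          simp only [Matrix.submatrix_apply, hA, Matrix.of_apply]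
          have h1 : ¬(Fin.succ i = Fin.castSucc i) := by
            intro h
            have := congrArg Fin.val h
            simp only [Fin.val_succ, Fin.coe_castSucc] at this
            omega
          have h2 : ((Fin.succ i : Fin (n + 1)) : ℕ) ≠ 0 := by simp
          have h3 : ((Fin.succ i : Fin (n + 1)) : ℕ) = ((Fin.castSucc i : Fin (n + 1)) : ℕ) + 1 := by
            simp
          rw [if_neg h1, if_neg h2, if_pos h3, zero_sub]
        calc (∏ i : Fin n, (A.submatrix Fin.succ Fin.castSucc) i i)
            = ∏ _i : Fin n, (-1 : ℂ) := Finset.prod_congr rfl fun i _ => hdiag i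
          _ = (-1 : ℂ) ^ n := by simp
      rw [hAll, hA0l, hsub0, hsub1]
      simp only [Fin.val_zero, Fin.val_last, zero_add]
      rw [Fin.sum_univ_castSucc
        (f := fun j : Fin (n + 1) => w j * x ^ (n + 1 - 1 - (j : ℕ)))]
      have hterm : ∀ j : Fin n, w j.castSucc * x ^ (n + 1 - 1 - ((j.castSucc : Fin (n + 1)) : ℕ))
          = w j.castSucc * (x ^ (n - 1 - (j : ℕ)) * x) := by
        intro j
        have h1 : n + 1 - 1 - ((j.castSucc : Fin (n + 1)) : ℕ) = (n - 1 - (j : ℕ)) + 1 := by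
          have := j.isLt
          simp only [Fin.coe_castSucc]
          omega
        rw [h1, pow_succ]
      rw [Finset.sum_congr rfl fun j _ => hterm j]
      have hnn : n + 1 - 1 - ((Fin.last n : Fin (n + 1)) : ℕ) = 0 := by
        simp only [Fin.val_last]
        omega
      rw [hnn, pow_zero]
      rw [pow_add ((-1 : ℂ)) n n]
      have hsq : ((-1 : ℂ)) ^ n * (-1 : ℂ) ^ n = 1 := by
        rw [← pow_add, ← two_mul, pow_mul]
        norm_num
      have hsum2 : ∑ j : Fin n, w j.castSucc * (x ^ (n - 1 - (j : ℕ)) * x)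
          = (∑ j : Fin n, w j.castSucc * x ^ (n - 1 - (j : ℕ))) * x := by
        rw [Finset.sum_mul]
        exact Finset.sum_congr rfl fun j _ => (mul_assoc _ _ _).symm
      rw [hsum2]
      linear_combination (-(w (Fin.last n))
        + x * (x ^ n - ∑ j : Fin n, w j.castSucc * x ^ (n - 1 - (j : ℕ)))) * hsq

lemma charpoly_eval {n : ℕ} (M : Matrix (Fin n) (Fin n) ℂ) (x : ℂ) :
    M.charpoly.eval x
      = Matrix.det (Matrix.of fun i j => (if i = j then x else 0) - M i j) := by
  have h1 : M.charpoly.eval x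
      = ((Polynomial.evalRingHom x).mapMatrix (Matrix.charmatrix M)).det := by
    rw [Matrix.charpoly, ← RingHom.map_det]
    rfl
  rw [h1]
  congr 1
  ext i j
  simp only [RingHom.mapMatrix_apply, Matrix.map_apply]
  by_cases h : i = j
  · subst h
    simp [Matrix.charmatrix_apply_eq]
  · simp [Matrix.charmatrix_apply_ne _ _ _ h, h]

lemma polyOf_coeff (n : ℕ) (b : ℕ → ℂ) (k : ℕ) :
    (polyOf n b).coeff k = if k < n then b k else 0 := by
  rw [polyOf, finset_sum_coeff]
  simp only [coeff_C_mul, coeff_X_pow, mul_ite, mul_one, mul_zero]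
  by_cases h : k < n
  · rw [if_pos h, Finset.sum_eq_single k]
    · rw [if_pos rfl]
    · intro i _ hik
      rw [if_neg (fun hh => hik hh.symm)]
    · intro hk
      exact absurd (Finset.mem_range.2 h) hk
  · rw [if_neg h, Finset.sum_eq_zero]
    intro i hi
    rw [Finset.mem_range] at hi
    rw [if_neg]
    omega

lemma circle_add {f g : ℂ → ℂ} (hf : CircleIntegrable f 0 1) (hg : CircleIntegrable g 0 1) :
    (∮ κ in C(0, 1), (f κ + g κ)) = (∮ κ in C(0, 1), f κ) + ∮ κ in C(0, 1), g κ := by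
  simp only [circleIntegral]
  rw [← intervalIntegral.integral_add hf.out hg.out]
  congr 1
  funext θ
  rw [smul_add]

lemma polyOf_eval_symbol (r p : ℕ) (a0 a1 : ℤ → ℂ) (u v : ℂ) {κ : ℂ} (hκ : κ ≠ 0) :
    (polyOf (p + r + 1)
        (fun i => u * a1 ((i : ℤ) - (r : ℤ)) - v * a0 ((i : ℤ) - (r : ℤ)))).eval κ
      = κ ^ (r : ℕ) * (u * symbol r p a1 κ - v * symbol r p a0 κ) := by
  rw [polyOf_eval]
  have hR : κ ^ (r : ℕ) * (u * symbol r p a1 κ - v * symbol r p a0 κ)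
      = ∑ ℓ ∈ Finset.Icc (-(r : ℤ)) (p : ℤ), (u * a1 ℓ - v * a0 ℓ) * κ ^ (ℓ + (r : ℤ)) := by
    rw [symbol, symbol, Finset.mul_sum, Finset.mul_sum, ← Finset.sum_sub_distrib,
      Finset.mul_sum]
    refine Finset.sum_congr rfl fun ℓ hℓ => ?_
    rw [zpow_add₀ hκ ℓ (r : ℤ), ← zpow_natCast κ r]
    ring
  rw [hR]
  refine (Finset.sum_nbij' (fun ℓ : ℤ => (ℓ + (r : ℤ)).toNat) (fun m : ℕ => (m : ℤ) - (r : ℤ))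
    ?_ ?_ ?_ ?_ ?_).symm
  · intro ℓ hℓ
    rw [Finset.mem_Icc] at hℓ
    rw [Finset.mem_range]
    omega
  · intro m hm
    rw [Finset.mem_range] at hm
    rw [Finset.mem_Icc]
    omega
  · intro ℓ hℓ
    rw [Finset.mem_Icc] at hℓ
    omega
  · intro m hm
    rw [Finset.mem_range] at hm
    omega
  · intro ℓ hℓ
    rw [Finset.mem_Icc] at hℓ
    have h1 : (((ℓ + (r : ℤ)).toNat : ℤ)) - (r : ℤ) = ℓ := by omega
    rw [h1]
    have h2 : κ ^ ((ℓ + (r : ℤ)).toNat) = κ ^ (ℓ + (r : ℤ)) := by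
      rw [← zpow_natCast κ ((ℓ + (r : ℤ)).toNat), Int.toNat_of_nonneg (by omega)]
    rw [h2]

lemma symbol_hasDerivAt (r p : ℕ) (a : ℤ → ℂ) {κ : ℂ} (hκ : κ ≠ 0) :
    HasDerivAt (symbol r p a)
      (∑ ℓ ∈ Finset.Icc (-(r : ℤ)) (p : ℤ), a ℓ * ((ℓ : ℂ) * κ ^ (ℓ - 1))) κ := by
  have h : ∀ ℓ ∈ Finset.Icc (-(r : ℤ)) (p : ℤ),
      HasDerivAt (fun y : ℂ => a ℓ * y ^ ℓ) (a ℓ * ((ℓ : ℂ) * κ ^ (ℓ - 1))) κ :=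
    fun ℓ _ => (hasDerivAt_zpow ℓ κ (Or.inl hκ)).const_mul (a ℓ)
  exact HasDerivAt.fun_sum h

lemma symbol_continuousOn (r p : ℕ) (a : ℤ → ℂ) :
    ContinuousOn (symbol r p a) (Metric.sphere (0 : ℂ) 1) := by
  intro κ hκ
  have hκ0 : κ ≠ 0 := by
    intro h
    rw [h, mem_sphere_zero_iff_norm, norm_zero] at hκ
    norm_num at hκ
  exact ((symbol_hasDerivAt r p a hκ0).differentiableAt.continuousAt).continuousWithinAt

lemma deriv_symbol_continuousOn (r p : ℕ) (a : ℤ → ℂ) :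
    ContinuousOn (fun κ => deriv (symbol r p a) κ) (Metric.sphere (0 : ℂ) 1) := by
  have hcongr : ∀ κ ∈ Metric.sphere (0 : ℂ) 1, deriv (symbol r p a) κ
      = ∑ ℓ ∈ Finset.Icc (-(r : ℤ)) (p : ℤ), a ℓ * ((ℓ : ℂ) * κ ^ (ℓ - 1)) := by
    intro κ hκ
    have hκ0 : κ ≠ 0 := by
      intro h
      rw [h, mem_sphere_zero_iff_norm, norm_zero] at hκ
      norm_num at hκ
    exact (symbol_hasDerivAt r p a hκ0).deriv
  refine ContinuousOn.congr ?_ hcongr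
  intro κ hκ
  have hκ0 : κ ≠ 0 := by
    intro h
    rw [h, mem_sphere_zero_iff_norm, norm_zero] at hκ
    norm_num at hκ
  exact ContinuousAt.continuousWithinAt (tendsto_finset_sum _ fun ℓ _ =>
    (continuousAt_const.mul (continuousAt_const.mul
      (continuousAt_zpow₀ κ (ℓ - 1) (Or.inl hκ0)))))

lemma q1_count (r p : ℕ) (a1 : ℤ → ℂ)
    (hne : ∀ κ : ℂ, ‖κ‖ = 1 → symbol r p a1 κ ≠ 0)
    (hidx : (2 * (Real.pi : ℂ) * Complex.I)⁻¹ *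
      (∮ κ in C(0, 1), deriv (symbol r p a1) κ / symbol r p a1 κ) = 0) :
    inCount (polyOf (p + r + 1) (fun i => a1 ((i : ℤ) - (r : ℤ)))) = r := by
  classical
  set q := polyOf (p + r + 1) (fun i => a1 ((i : ℤ) - (r : ℤ))) with hqdef
  have hfam : (fun i : ℕ => a1 ((i : ℤ) - (r : ℤ)))
      = fun i : ℕ => 1 * a1 ((i : ℤ) - (r : ℤ)) - 0 * a1 ((i : ℤ) - (r : ℤ)) := by
    funext i
    ring
  have hqs : ∀ κ : ℂ, κ ≠ 0 → q.eval κ = κ ^ (r : ℕ) * symbol r p a1 κ := by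
    intro κ hκ
    rw [hqdef, hfam, polyOf_eval_symbol r p a1 a1 1 0 hκ]
    ring
  have hq_ne : ∀ κ : ℂ, ‖κ‖ = 1 → q.eval κ ≠ 0 := by
    intro κ hκ
    have hκ0 : κ ≠ 0 := by
      intro h
      rw [h, norm_zero] at hκ
      norm_num at hκ
    rw [hqs κ hκ0]
    exact mul_ne_zero (pow_ne_zero _ hκ0) (hne κ hκ)
  have harg := argument_principle q hq_ne
  have key : Set.EqOn (fun κ => q.derivative.eval κ / q.eval κ)
      (fun κ => (r : ℂ) * (κ - 0)⁻¹ + deriv (symbol r p a1) κ / symbol r p a1 κ)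
      (Metric.sphere (0 : ℂ) 1) := by
    intro κ hκmem
    have hκ : ‖κ‖ = 1 := by simpa [mem_sphere_zero_iff_norm] using hκmem
    have hκ0 : κ ≠ 0 := by
      intro h
      rw [h, norm_zero] at hκ
      norm_num at hκ
    have hs : symbol r p a1 κ ≠ 0 := hne κ hκ
    have hds := symbol_hasDerivAt r p a1 hκ0
    have hev : (fun y => q.eval y) =ᶠ[nhds κ] fun y => y ^ (r : ℕ) * symbol r p a1 y := by
      filter_upwards [(isOpen_compl_singleton (x := (0 : ℂ))).mem_nhds hκ0] with y hy
      exact hqs y hy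
    have hprod : HasDerivAt (fun y : ℂ => y ^ (r : ℕ) * symbol r p a1 y)
        ((r : ℂ) * κ ^ (r - 1) * symbol r p a1 κ
          + κ ^ (r : ℕ) * deriv (symbol r p a1) κ) κ := by
      have hmul := (hasDerivAt_pow r κ).mul hds
      rw [hds.deriv]
      exact hmul
    have hq' : q.derivative.eval κ
        = (r : ℂ) * κ ^ (r - 1) * symbol r p a1 κ + κ ^ (r : ℕ) * deriv (symbol r p a1) κ := by
      rw [← Polynomial.deriv, hev.deriv_eq, hprod.deriv]
    show q.derivative.eval κ / q.eval κ = _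
    rw [hq', hqs κ hκ0]
    rcases r with _ | r'
    · simp
    · have hpow : κ ^ (r' + 1 - 1) = κ ^ r' := by norm_num
      rw [hpow]
      simp only [sub_zero]
      field_simp
      ring
  rw [circleIntegral.integral_congr zero_le_one key] at harg
  have hint1 : CircleIntegrable (fun κ : ℂ => (r : ℂ) * (κ - 0)⁻¹) 0 1 := by
    apply ContinuousOn.circleIntegrable zero_le_one
    apply ContinuousOn.mul continuousOn_const
    apply ContinuousOn.inv₀ (continuous_sub_right (0 : ℂ)).continuousOn
    intro κ hκ h
    rw [sub_zero] at h
    rw [h, mem_sphere_zero_iff_norm, norm_zero] at hκ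
    norm_num at hκ
  have hint2 : CircleIntegrable
      (fun κ => deriv (symbol r p a1) κ / symbol r p a1 κ) 0 1 := by
    apply ContinuousOn.circleIntegrable zero_le_one
    apply ContinuousOn.div (deriv_symbol_continuousOn r p a1) (symbol_continuousOn r p a1)
    intro κ hκ
    exact hne κ (by simpa [mem_sphere_zero_iff_norm] using hκ)
  rw [circle_add hint1 hint2] at harg
  rw [circleIntegral.integral_const_mul,
    circleIntegral.integral_sub_center_inv 0 (one_ne_zero)] at harg
  have hzero2 : (∮ κ in C(0, 1), deriv (symbol r p a1) κ / symbol r p a1 κ) = 0 := by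
    by_contra hzz
    exact hzz (by
      have := hidx
      field_simp [two_pi_I_ne] at this
      simpa using this)
  rw [hzero2, add_zero] at harg
  have : (2 * (Real.pi : ℂ) * Complex.I) * (r : ℂ)
      = 2 * (Real.pi : ℂ) * Complex.I * (inCount q : ℂ) := by
    rw [← harg]
    ring
  have h2 := mul_left_cancel₀ two_pi_I_ne this
  exact_mod_cast h2.symm

end SpecAux



/-- Lemma 1 (spectral splitting), first part: for `z ∈ 𝒰̄ \ {z̲₁,…,z̲_K}`, the matrix `𝕄(z)` has
no eigenvalue on `𝕊¹`, exactly `r` eigenvalues in `𝔻 \ {0}` and exactly `p` eigenvalues in `𝒰`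
(counted with algebraic multiplicity, i.e. as roots of the characteristic polynomial). -/
theorem spectral_splitting (S : Setup) (z : ℂ) (hz : 1 ≤ ‖z‖)
    (hzk : ∀ k, z ≠ S.zK k) :
    (∀ κ ∈ (S.M z).charpoly.roots, ‖κ‖ ≠ 1) ∧
    ((S.M z).charpoly.roots.filter fun κ => ‖κ‖ < 1 ∧ κ ≠ 0).card = S.r ∧
    ((S.M z).charpoly.roots.filter fun κ => 1 < ‖κ‖).card = S.p := by
  classical
  obtain ⟨hAr, hAp⟩ := S.hA z hz
  set P : ℂ → Polynomial ℂ := fun z' => SpecAux.polyOf (S.p + S.r + 1)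
    (fun i => z' * S.a1 ((i : ℤ) - (S.r : ℤ)) - 1 * S.a0 ((i : ℤ) - (S.r : ℤ))) with hP
  have hAc : ∀ (z' : ℂ) (i : ℕ), (z' * S.a1 ((i : ℤ) - S.r) - 1 * S.a0 ((i : ℤ) - S.r))
      = Acoef S.a0 S.a1 ((i : ℤ) - S.r) z' := fun z' i => by rw [Acoef]; ring
  -- Step 1 : the characteristic polynomial identity
  have hchar : (S.M z).charpoly
      = Polynomial.C (Acoef S.a0 S.a1 (S.p : ℤ) z)⁻¹ * P z := by
    apply Polynomial.funext
    intro x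
    rw [SpecAux.charpoly_eval (S.M z) x]
    have hMeq : (Matrix.of fun i j => (if i = j then x else 0) - S.M z i j)
        = Matrix.of (fun i j : Fin (S.p + S.r) =>
          (if i = j then x else 0) -
          (if (i : ℕ) = 0 then
             (fun j : Fin (S.p + S.r) =>
               - Acoef S.a0 S.a1 ((S.p : ℤ) - 1 - ((j : ℕ) : ℤ)) z
                 / Acoef S.a0 S.a1 (S.p : ℤ) z) j
           else if (i : ℕ) = (j : ℕ) + 1 then 1 else 0)) := rfl
    rw [hMeq, SpecAux.comp_det]
    simp only [hP]
    rw [Polynomial.eval_mul, Polynomial.eval_C, SpecAux.polyOf_eval]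
    have hsum1 : ∑ i ∈ Finset.range (S.p + S.r + 1),
        (z * S.a1 ((i : ℤ) - S.r) - 1 * S.a0 ((i : ℤ) - S.r)) * x ^ i
        = ∑ i ∈ Finset.range (S.p + S.r + 1), Acoef S.a0 S.a1 ((i : ℤ) - S.r) z * x ^ i :=
      Finset.sum_congr rfl fun i _ => by rw [hAc z i]
    rw [hsum1, Finset.sum_range_succ]
    have hc : (((S.p + S.r : ℕ)) : ℤ) - (S.r : ℤ) = (S.p : ℤ) := by push_cast; ring
    rw [hc]
    rw [Fin.sum_univ_eq_sum_range (fun m : ℕ =>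
      (- Acoef S.a0 S.a1 ((S.p : ℤ) - 1 - (m : ℤ)) z / Acoef S.a0 S.a1 (S.p : ℤ) z)
        * x ^ (S.p + S.r - 1 - m)) (S.p + S.r)]
    have hrefl : ∑ j ∈ Finset.range (S.p + S.r),
        (- Acoef S.a0 S.a1 ((S.p : ℤ) - 1 - (j : ℤ)) z / Acoef S.a0 S.a1 (S.p : ℤ) z)
          * x ^ (S.p + S.r - 1 - j)
        = ∑ j ∈ Finset.range (S.p + S.r),
        (- Acoef S.a0 S.a1 ((j : ℤ) - (S.r : ℤ)) z / Acoef S.a0 S.a1 (S.p : ℤ) z) * x ^ j := by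
      rw [← Finset.sum_range_reflect
        (fun j => (- Acoef S.a0 S.a1 ((j : ℤ) - (S.r : ℤ)) z
          / Acoef S.a0 S.a1 (S.p : ℤ) z) * x ^ j) (S.p + S.r)]
      refine Finset.sum_congr rfl fun j hj => ?_
      rw [Finset.mem_range] at hj
      have h1 : ((S.p + S.r - 1 - j : ℕ) : ℤ) - (S.r : ℤ) = (S.p : ℤ) - 1 - (j : ℤ) := by
        omega
      rw [h1]
    rw [hrefl, mul_add, inv_mul_cancel_left₀ hAp, Finset.mul_sum]
    have hterm : ∀ j ∈ Finset.range (S.p + S.r),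
        (Acoef S.a0 S.a1 (S.p : ℤ) z)⁻¹ * (Acoef S.a0 S.a1 ((j : ℤ) - (S.r : ℤ)) z * x ^ j)
        = -((- Acoef S.a0 S.a1 ((j : ℤ) - (S.r : ℤ)) z / Acoef S.a0 S.a1 (S.p : ℤ) z) * x ^ j) :=
      fun j _ => by field_simp
    rw [Finset.sum_congr rfl hterm]
    rw [Finset.sum_neg_distrib]
    ring
  have hroots : (S.M z).charpoly.roots = (P z).roots := by
    rw [hchar]
    exact Polynomial.roots_C_mul _ (inv_ne_zero hAp)
  -- Step 2 : no roots on the unit circle, for any admissible z'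
  have hsphere : ∀ z' : ℂ, 1 ≤ ‖z'‖ → (∀ k, z' ≠ S.zK k) →
      ∀ κ : ℂ, ‖κ‖ = 1 → (P z').eval κ ≠ 0 := by
    intro z' hz1 hzk' κ hκ heval
    have hκ0 : κ ≠ 0 := by
      intro h
      rw [h, norm_zero] at hκ
      norm_num at hκ
    simp only [hP] at heval
    rw [SpecAux.polyOf_eval_symbol S.r S.p S.a0 S.a1 z' 1 hκ0] at heval
    have hs1 : symbol S.r S.p S.a1 κ ≠ 0 := S.hQ1_ne κ hκ
    have hzs : z' * symbol S.r S.p S.a1 κ - 1 * symbol S.r S.p S.a0 κ = 0 := by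
      rcases mul_eq_zero.1 heval with h | h
      · exact absurd h (pow_ne_zero _ hκ0)
      · exact h
    have hzF : z' = Fsym S.r S.p S.a0 S.a1 κ := by
      rw [Fsym, eq_div_iff hs1]
      linear_combination hzs
    by_cases hk : ∃ k, κ = S.kap k
    · obtain ⟨k, rfl⟩ := hk
      exact hzk' k (by rw [hzF]; rfl)
    · push_neg at hk
      have hlt := S.hF_lt κ hκ hk
      rw [← hzF] at hlt
      linarith
  -- Step 3 : a bound for F on the circle, and the base point z₀
  have hFc : ContinuousOn (fun κ => Fsym S.r S.p S.a0 S.a1 κ) (Metric.sphere (0 : ℂ) 1) := by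
    apply ContinuousOn.div (SpecAux.symbol_continuousOn S.r S.p S.a0)
      (SpecAux.symbol_continuousOn S.r S.p S.a1)
    intro κ hκ
    exact S.hQ1_ne κ (by simpa [mem_sphere_zero_iff_norm] using hκ)
  obtain ⟨Cb, hCb⟩ := (isCompact_sphere (0 : ℂ) 1).exists_bound_of_continuousOn hFc
  set z₀ : ℂ := ((max Cb 0 + 2 : ℝ) : ℂ) with hz₀
  have hz₀n : ‖z₀‖ = max Cb 0 + 2 := by
    rw [hz₀, Complex.norm_real]
    exact abs_of_pos (by positivity)
  have hz₀1 : 1 < ‖z₀‖ := by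
    rw [hz₀n]
    have := le_max_right Cb 0
    linarith
  have hzKn : ∀ k, ‖S.zK k‖ = 1 := fun k => S.hF_unit k
  have hz₀k : ∀ k, z₀ ≠ S.zK k := by
    intro k h
    rw [h, hzKn k] at hz₀1
    exact lt_irrefl 1 hz₀1
  -- Step 4 : the count is constant on the region
  set Ω : Set ℂ := {z' | 1 ≤ ‖z'‖ ∧ ∀ k, z' ≠ S.zK k} with hΩ
  have hΩpre : IsPreconnected Ω := by
    apply SpecAux.preconn_sandwich
    · intro z' hz'
      have hz'1 : 1 < ‖z'‖ := hz'
      refine ⟨le_of_lt hz'1, fun k h => ?_⟩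
      rw [h, hzKn k] at hz'1
      exact lt_irrefl 1 hz'1
    · exact fun z' hz' => hz'.1
  have hloccnt : ∀ x ∈ Ω, ∀ᶠ y in nhds x,
      SpecAux.inCount (P y) = SpecAux.inCount (P x) := by
    intro x hx
    exact SpecAux.count_eventually_const (S.p + S.r + 1)
      (fun i z' => z' * S.a1 ((i : ℤ) - S.r) - 1 * S.a0 ((i : ℤ) - S.r))
      (fun i => (continuous_id.mul continuous_const).sub continuous_const) x
      (fun κ hκ => hsphere x hx.1 hx.2 κ hκ)
  have hconst : SpecAux.inCount (P z) = SpecAux.inCount (P z₀) :=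
    SpecAux.loc_const (fun z' => SpecAux.inCount (P z')) hΩpre hloccnt
      ⟨hz, hzk⟩ ⟨le_of_lt hz₀1, hz₀k⟩
  -- Step 5 : the homotopy from z₀ Q̂₁ - Q̂₀ to z₀ Q̂₁
  set Q : ℝ → Polynomial ℂ := fun t => SpecAux.polyOf (S.p + S.r + 1)
    (fun i => z₀ * S.a1 ((i : ℤ) - S.r) - ((t : ℝ) : ℂ) * S.a0 ((i : ℤ) - S.r)) with hQ
  have hQsphere : ∀ t ∈ Set.Icc (0 : ℝ) 1, ∀ κ : ℂ, ‖κ‖ = 1 → (Q t).eval κ ≠ 0 := by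
    intro t ht κ hκ heval
    have hκ0 : κ ≠ 0 := by
      intro h
      rw [h, norm_zero] at hκ
      norm_num at hκ
    simp only [hQ] at heval
    rw [SpecAux.polyOf_eval_symbol S.r S.p S.a0 S.a1 z₀ ((t : ℝ) : ℂ) hκ0] at heval
    have hs1 : symbol S.r S.p S.a1 κ ≠ 0 := S.hQ1_ne κ hκ
    have hs1p : 0 < ‖symbol S.r S.p S.a1 κ‖ := norm_pos_iff.2 hs1
    have hzs : z₀ * symbol S.r S.p S.a1 κ = ((t : ℝ) : ℂ) * symbol S.r S.p S.a0 κ := by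
      rcases mul_eq_zero.1 heval with h | h
      · exact absurd h (pow_ne_zero _ hκ0)
      · exact sub_eq_zero.1 h
    have hnorm := congrArg Norm.norm hzs
    rw [norm_mul, norm_mul, hz₀n, Complex.norm_real, Real.norm_eq_abs] at hnorm
    have hFb := hCb κ (by rw [mem_sphere_zero_iff_norm]; exact hκ)
    rw [Fsym, norm_div] at hFb
    have hs0b : ‖symbol S.r S.p S.a0 κ‖ ≤ Cb * ‖symbol S.r S.p S.a1 κ‖ := by
      rw [div_le_iff₀ hs1p] at hFb
      linarith [hFb]
    have htabs : |t| ≤ 1 := abs_le.2 ⟨by linarith [ht.1], ht.2⟩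
    nlinarith [norm_nonneg (symbol S.r S.p S.a0 κ), le_max_left Cb 0,
      mul_le_mul_of_nonneg_right htabs (norm_nonneg (symbol S.r S.p S.a0 κ)),
      mul_le_mul_of_nonneg_right (le_max_left Cb 0) (norm_nonneg (symbol S.r S.p S.a1 κ)),
      abs_nonneg t]
  have hQconst : SpecAux.inCount (Q 1) = SpecAux.inCount (Q 0) :=
    SpecAux.loc_const (fun t => SpecAux.inCount (Q t)) isPreconnected_Icc
      (fun t ht => SpecAux.count_eventually_const (S.p + S.r + 1)
        (fun i t' => z₀ * S.a1 ((i : ℤ) - S.r) - ((t' : ℝ) : ℂ) * S.a0 ((i : ℤ) - S.r))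
        (fun i => continuous_const.sub (Complex.continuous_ofReal.mul continuous_const))
        t (fun κ hκ => hQsphere t ht κ hκ))
      (Set.mem_Icc.2 ⟨zero_le_one, le_refl 1⟩) (Set.mem_Icc.2 ⟨le_refl 0, zero_le_one⟩)
  have hQ1P : Q 1 = P z₀ := by
    simp only [hQ, hP, Complex.ofReal_one]
  have hz₀ne : z₀ ≠ 0 := by
    intro h
    rw [h, norm_zero] at hz₀1
    linarith
  have hQ0r : SpecAux.inCount (Q 0) = S.r := by
    have hfam0 : (fun i : ℕ => z₀ * S.a1 ((i : ℤ) - S.r)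
          - (((0 : ℝ) : ℝ) : ℂ) * S.a0 ((i : ℤ) - S.r))
        = fun i : ℕ => z₀ * S.a1 ((i : ℤ) - S.r) := by
      funext i
      norm_num
    simp only [hQ]
    rw [hfam0, SpecAux.polyOf_smul (S.p + S.r + 1) (fun i => S.a1 ((i : ℤ) - S.r)) z₀]
    rw [SpecAux.inCount, Polynomial.roots_C_mul _ hz₀ne]
    exact SpecAux.q1_count S.r S.p S.a1 S.hQ1_ne S.hQ1_index
  have hPzr : SpecAux.inCount (P z) = S.r := by
    rw [hconst, ← hQ1P, hQconst, hQ0r]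
  -- Step 6 : assembling the counts
  have hPtop : (P z).coeff (S.p + S.r) = Acoef S.a0 S.a1 (S.p : ℤ) z := by
    simp only [hP]
    rw [SpecAux.polyOf_coeff, if_pos (by omega)]
    have hc : (((S.p + S.r : ℕ)) : ℤ) - (S.r : ℤ) = (S.p : ℤ) := by push_cast; ring
    rw [hc, Acoef]
    ring
  have hPne : P z ≠ 0 := fun h => hAp (by rw [← hPtop, h, Polynomial.coeff_zero])
  have hdeg : (P z).natDegree = S.p + S.r := by
    refine le_antisymm ?_ (Polynomial.le_natDegree_of_ne_zero ?_)
    · rw [Polynomial.natDegree_le_iff_coeff_eq_zero]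
      intro N hN
      simp only [hP]
      rw [SpecAux.polyOf_coeff, if_neg (by omega)]
    · rw [hPtop]
      exact hAp
  have hcard : Multiset.card (P z).roots = S.p + S.r := by
    have hsp : Polynomial.Splits (P z) := IsAlgClosed.splits (P z)
    have h1 := hsp.natDegree_eq_card_roots
    rw [← h1, hdeg]
  have hzero : ∀ κ ∈ (P z).roots, κ ≠ 0 := by
    intro κ hκ h0
    have hev := (Polynomial.mem_roots hPne).1 hκ
    rw [Polynomial.IsRoot, h0] at hev
    have hc0 : (P z).coeff 0 = 0 := by rw [Polynomial.coeff_zero_eq_eval_zero]; exact hev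
    apply hAr
    simp only [hP] at hc0
    rw [SpecAux.polyOf_coeff, if_pos (by omega)] at hc0
    have hcc : (((0 : ℕ)) : ℤ) - (S.r : ℤ) = -(S.r : ℤ) := by push_cast; ring
    rw [hcc] at hc0
    rw [Acoef]
    linear_combination hc0
  have hNoCirc : ∀ κ ∈ (P z).roots, ‖κ‖ ≠ 1 := fun κ hκ h1 =>
    hsphere z hz hzk κ h1 ((Polynomial.mem_roots hPne).1 hκ)
  refine ⟨?_, ?_, ?_⟩
  · intro κ hκ
    rw [hroots] at hκ
    exact hNoCirc κ hκ
  · rw [hroots]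
    have hfe : (P z).roots.filter (fun κ => ‖κ‖ < 1 ∧ κ ≠ 0)
        = (P z).roots.filter (fun κ => ‖κ‖ < 1) :=
      Multiset.filter_congr (fun κ hκ => ⟨fun h => h.1, fun h => ⟨h, hzero κ hκ⟩⟩)
    rw [hfe]
    exact hPzr
  · rw [hroots]
    have hsplit := Multiset.filter_add_not (fun κ => ‖κ‖ < 1) (P z).roots
    have hcc : ((P z).roots.filter (fun κ => ‖κ‖ < 1)).card
        + ((P z).roots.filter (fun κ => ¬ ‖κ‖ < 1)).card = S.p + S.r := by
      rw [← Multiset.card_add, hsplit, hcard]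
    have hffe : (P z).roots.filter (fun κ => ¬ ‖κ‖ < 1)
        = (P z).roots.filter (fun κ => 1 < ‖κ‖) :=
      Multiset.filter_congr (fun κ hκ => by
        constructor
        · intro h
          exact lt_of_le_of_ne (not_lt.1 h) (Ne.symm (hNoCirc κ hκ))
        · intro h
          exact not_lt.2 (le_of_lt h))
    rw [hffe] at hcc
    have hr : ((P z).roots.filter (fun κ => ‖κ‖ < 1)).card = S.r := hPzr
    omega
end
end

section
/- Under Assumptions 1–5 in the explicit specialization with K = 1 and α > 0, there exist constants η > 0, C > 0 and c > 0 such that for every integer n ≥ 1 and every j ∈ ℤ with −n p ≤ j ≤ 0, the temporal Green's function satisfies |𝒢ⁿ_j| ≤ C exp(−n η − c |j|). -/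
open scoped Classical
open Complex Filter Asymptotics Metric

noncomputable section

set_option autoImplicit false

def cseq (r p : ℕ) (a0 : ℤ → ℂ) : ℕ → ℤ → ℂ
  | 0 => fun j => if j = 0 then 1 else 0
  | n+1 => fun j => ∑ ℓ ∈ Finset.Icc (-(r : ℤ)) (p : ℤ), a0 ℓ * cseq r p a0 n (j + ℓ)

lemma cseq_support (r p : ℕ) (a0 : ℤ → ℂ) (n : ℕ) (j : ℤ)
    (hj : j ∉ Finset.Icc (-(p : ℤ) * n) ((r : ℤ) * n)) : cseq r p a0 n j = 0 := by
  induction n generalizing j with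
  | zero =>
    simp only [Nat.cast_zero, mul_zero, Finset.mem_Icc] at hj
    simp only [cseq]
    rw [if_neg]; omega
  | succ n ih =>
    simp only [Finset.mem_Icc, not_and_or, not_le] at hj
    simp only [cseq]
    apply Finset.sum_eq_zero
    intro ℓ hℓ
    simp only [Finset.mem_Icc] at hℓ
    rw [ih, mul_zero]
    simp only [Finset.mem_Icc, not_and_or, not_le]
    rcases hj with h | h
    · left
      have h' : j < -(p : ℤ) * n - p := by push_cast at h; linarith
      linarith [hℓ.2]
    · right
      have h' : (r : ℤ) * n + r < j := by push_cast at h; linarith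
      linarith [hℓ.1]

lemma cseq_eval (r p : ℕ) (a0 : ℤ → ℂ) (n : ℕ) (κ : ℂ) (hκ : κ ≠ 0) :
    (symbol r p a0 κ) ^ n =
      ∑ k ∈ Finset.Icc (-(p : ℤ) * n) ((r : ℤ) * n), cseq r p a0 n k * κ ^ (-k) := by
  induction n with
  | zero => simp [cseq]
  | succ n ih =>
    have key : ∀ ℓ ∈ Finset.Icc (-(r : ℤ)) (p : ℤ),
        ∑ k ∈ Finset.Icc (-(p : ℤ) * n) ((r : ℤ) * n),
          (a0 ℓ * κ ^ ℓ) * (cseq r p a0 n k * κ ^ (-k)) =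
        ∑ j ∈ Finset.Icc (-(p : ℤ) * (n+1)) ((r : ℤ) * (n+1)),
          a0 ℓ * cseq r p a0 n (j + ℓ) * κ ^ (-j) := by
      intro ℓ hℓ
      simp only [Finset.mem_Icc] at hℓ
      have hsub : Finset.Icc (-(p : ℤ) * n) ((r : ℤ) * n) ⊆
          Finset.Icc (-(p : ℤ) * (n+1) + ℓ) ((r : ℤ) * (n+1) + ℓ) := by
        apply Finset.Icc_subset_Icc <;> push_cast <;> linarith [hℓ.1, hℓ.2]
      rw [Finset.sum_subset hsub (by
        intro k _ hk
        rw [cseq_support r p a0 n k hk, zero_mul, mul_zero])]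
      rw [← Finset.map_add_right_Icc, Finset.sum_map]
      apply Finset.sum_congr rfl
      intro j _
      simp only [addRightEmbedding_apply]
      have hone : κ ^ ℓ * κ ^ (-ℓ) = 1 := by
        rw [← zpow_add₀ hκ]; simp
      rw [neg_add, zpow_add₀ hκ]
      calc a0 ℓ * κ ^ ℓ * (cseq r p a0 n (j + ℓ) * (κ ^ (-j) * κ ^ (-ℓ))) =
          a0 ℓ * cseq r p a0 n (j + ℓ) * κ ^ (-j) * (κ ^ ℓ * κ ^ (-ℓ)) := by ring
        _ = a0 ℓ * cseq r p a0 n (j + ℓ) * κ ^ (-j) := by rw [hone, mul_one]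
    calc (symbol r p a0 κ) ^ (n+1) = symbol r p a0 κ * (symbol r p a0 κ) ^ n := by
          rw [pow_succ']
      _ = ∑ ℓ ∈ Finset.Icc (-(r : ℤ)) (p : ℤ),
            ∑ k ∈ Finset.Icc (-(p : ℤ) * n) ((r : ℤ) * n),
              (a0 ℓ * κ ^ ℓ) * (cseq r p a0 n k * κ ^ (-k)) := by
          rw [ih, symbol, Finset.sum_mul_sum]
      _ = ∑ ℓ ∈ Finset.Icc (-(r : ℤ)) (p : ℤ),
            ∑ j ∈ Finset.Icc (-(p : ℤ) * (n+1)) ((r : ℤ) * (n+1)),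
              a0 ℓ * cseq r p a0 n (j + ℓ) * κ ^ (-j) := Finset.sum_congr rfl key
      _ = ∑ j ∈ Finset.Icc (-(p : ℤ) * (n+1)) ((r : ℤ) * (n+1)),
            ∑ ℓ ∈ Finset.Icc (-(r : ℤ)) (p : ℤ),
              a0 ℓ * cseq r p a0 n (j + ℓ) * κ ^ (-j) := Finset.sum_comm
      _ = ∑ j ∈ Finset.Icc (-(p : ℤ) * (n+1)) ((r : ℤ) * (n+1)),
            cseq r p a0 (n+1) j * κ ^ (-j) := by
          apply Finset.sum_congr rfl
          intro j _
          rw [show cseq r p a0 (n+1) j =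
            ∑ ℓ ∈ Finset.Icc (-(r : ℤ)) (p : ℤ), a0 ℓ * cseq r p a0 n (j + ℓ) from rfl,
            Finset.sum_mul]

lemma cseq_bound (r p : ℕ) (a0 : ℤ → ℂ) (ρ M : ℝ) (hρ : 1 ≤ ρ) (hM : 0 ≤ M)
    (hbd : ∀ κ : ℂ, ‖κ‖ = ρ → ‖symbol r p a0 κ‖ ≤ M) (n : ℕ) (j : ℤ)
    (hjmem : j ∈ Finset.Icc (-(p : ℤ) * n) ((r : ℤ) * n)) (hj : j ≤ 0) :
    ‖cseq r p a0 n j‖ ≤ M ^ n := by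
  classical
  set N : ℕ := (p + r) * n + 1 with hN
  have hNpos : 0 < N := Nat.succ_pos _
  have hNne : (N : ℂ) ≠ 0 := Nat.cast_ne_zero.mpr hNpos.ne'
  set ζ : ℂ := Complex.exp (2 * (Real.pi : ℂ) * Complex.I / N) with hζ
  have hprim : IsPrimitiveRoot ζ N := Complex.isPrimitiveRoot_exp N hNpos.ne'
  have hζnorm : ‖ζ‖ = 1 := by
    rw [hζ, show 2 * (Real.pi : ℂ) * Complex.I / N = ((2 * Real.pi / N : ℝ) : ℂ) * Complex.I by
      push_cast; ring]
    exact Complex.norm_exp_ofReal_mul_I _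
  have hζne : ζ ≠ 0 := by
    intro h; rw [h, norm_zero] at hζnorm; norm_num at hζnorm
  have hρpos : (0 : ℝ) < ρ := lt_of_lt_of_le one_pos hρ
  have hρne : ((ρ : ℂ)) ≠ 0 := by exact_mod_cast hρpos.ne'
  set κf : ℕ → ℂ := fun m => (ρ : ℂ) * ζ ^ m with hκf
  have hκnorm : ∀ m, ‖κf m‖ = ρ := by
    intro m
    rw [hκf]
    simp [norm_mul, norm_pow, hζnorm, abs_of_pos hρpos]
  have hκne : ∀ m, κf m ≠ 0 := fun m => mul_ne_zero hρne (pow_ne_zero _ hζne)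
  -- key identity
  have key : (N : ℂ) * cseq r p a0 n j =
      ∑ m ∈ Finset.range N, (symbol r p a0 (κf m)) ^ n * (κf m) ^ j := by
    have expand : ∀ m ∈ Finset.range N, (symbol r p a0 (κf m)) ^ n * (κf m) ^ j =
        ∑ k ∈ Finset.Icc (-(p : ℤ) * n) ((r : ℤ) * n),
          cseq r p a0 n k * ((ρ : ℂ) ^ (j - k) * (ζ ^ (j - k)) ^ m) := by
      intro m _
      rw [cseq_eval r p a0 n (κf m) (hκne m), Finset.sum_mul]
      apply Finset.sum_congr rfl
      intro k _
      rw [mul_assoc, ← zpow_add₀ (hκne m), hκf]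
      rw [mul_zpow, ← zpow_natCast (ζ ^ (j - k)), ← zpow_mul, mul_comm (j - k) (m : ℤ),
        zpow_mul, zpow_natCast]
      ring_nf
    rw [Finset.sum_congr rfl expand, Finset.sum_comm]
    have inner : ∀ k ∈ Finset.Icc (-(p : ℤ) * n) ((r : ℤ) * n),
        ∑ m ∈ Finset.range N, cseq r p a0 n k * ((ρ : ℂ) ^ (j - k) * (ζ ^ (j - k)) ^ m) =
        if k = j then (N : ℂ) * cseq r p a0 n j else 0 := by
      intro k hk
      simp only [Finset.mem_Icc] at hk hjmem
      by_cases hkj : k = j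
      · subst hkj
        simp [Finset.sum_const, sub_self, mul_comm]
      · have hd : ζ ^ (j - k) ≠ 1 := by
          intro h1
          have hdvd : (N : ℤ) ∣ (j - k) := hprim.zpow_eq_one_iff_dvd (j - k) |>.mp h1
          have habs : |j - k| < (N : ℤ) := by
            rw [hN]
            push_cast
            rw [abs_lt]
            constructor <;> nlinarith [hk.1, hk.2, hjmem.1, hjmem.2]
          have := Int.eq_zero_of_abs_lt_dvd hdvd habs
          omega
        rw [← Finset.mul_sum, ← Finset.mul_sum, geom_sum_eq hd]
        have : (ζ ^ (j - k)) ^ N - 1 = 0 := by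
          rw [← zpow_natCast (ζ ^ (j - k)), ← zpow_mul, mul_comm, zpow_mul, zpow_natCast,
            hprim.pow_eq_one, one_zpow, sub_self]
        rw [this, zero_div, mul_zero, mul_zero, if_neg hkj]
    rw [Finset.sum_congr rfl inner, Finset.sum_ite_eq' _ j
      (fun _ => (N : ℂ) * cseq r p a0 n j), if_pos hjmem]
  -- bound
  have hnorm : (N : ℝ) * ‖cseq r p a0 n j‖ ≤ (N : ℝ) * M ^ n := by
    calc (N : ℝ) * ‖cseq r p a0 n j‖ = ‖(N : ℂ) * cseq r p a0 n j‖ := by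
          rw [norm_mul]; simp
      _ = ‖∑ m ∈ Finset.range N, (symbol r p a0 (κf m)) ^ n * (κf m) ^ j‖ := by rw [key]
      _ ≤ ∑ m ∈ Finset.range N, ‖(symbol r p a0 (κf m)) ^ n * (κf m) ^ j‖ :=
          norm_sum_le _ _
      _ ≤ ∑ m ∈ Finset.range N, M ^ n * 1 := by
          apply Finset.sum_le_sum
          intro m _
          rw [norm_mul, norm_pow, norm_zpow, hκnorm m]
          apply mul_le_mul
          · exact pow_le_pow_left₀ (norm_nonneg _) (hbd _ (hκnorm m)) n
          · exact zpow_le_one_of_nonpos₀ hρ hj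
          · positivity
          · positivity
      _ = (N : ℝ) * M ^ n := by simp [mul_comm]
  have := mul_le_mul_iff_right₀ (show (0:ℝ) < N by exact_mod_cast hNpos) |>.mp hnorm
  exact this

def Dsym (r p : ℕ) (a0 : ℤ → ℂ) (κ : ℂ) : ℂ :=
  ∑ ℓ ∈ Finset.Icc (-(r : ℤ)) (p : ℤ), a0 ℓ * ((ℓ : ℂ) * κ ^ (ℓ - 1))

lemma hasDerivAt_symbol (r p : ℕ) (a0 : ℤ → ℂ) (κ : ℂ) (hκ : κ ≠ 0) :
    HasDerivAt (symbol r p a0) (Dsym r p a0 κ) κ :=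
  HasDerivAt.fun_sum (fun ℓ _ => (hasDerivAt_zpow ℓ κ (Or.inl hκ)).const_mul (a0 ℓ))

lemma continuousAt_Dsym (r p : ℕ) (a0 : ℤ → ℂ) (κ : ℂ) (hκ : κ ≠ 0) :
    ContinuousAt (Dsym r p a0) κ :=
  HasDerivAt.continuousAt (f' := ∑ ℓ ∈ Finset.Icc (-(r : ℤ)) (p : ℤ),
      a0 ℓ * ((ℓ : ℂ) * ((ℓ - 1 : ℤ) * κ ^ (ℓ - 1 - 1))))
    (HasDerivAt.fun_sum (fun ℓ _ =>
      ((hasDerivAt_zpow (ℓ - 1) κ (Or.inl hκ)).const_mul ((ℓ : ℂ))).const_mul (a0 ℓ)))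

/-- Grönwall-type decay along outward rays near `1`. -/
lemma gronwall_ray (G D : ℂ → ℂ) (α : ℝ) (hα : 0 < α) (ε : ℝ) (hε : 0 < ε)
    (hG : ∀ z : ℂ, dist z 1 < ε → HasDerivAt G (D z) z)
    (hball : ∀ z : ℂ, dist z 1 < ε → G z ≠ 0 ∧ (z * D z / G z).re ≤ -α / 2)
    (s : ℝ) (hs : 0 < s) (hse : Real.exp s - 1 < ε / 2)
    (κ₀ : ℂ) (hκn : ‖κ₀‖ = 1) (hnear : dist κ₀ 1 < ε / 2)
    (hG0 : ‖G κ₀‖ ≤ 1) :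
    ‖G ((Real.exp s : ℂ) * κ₀)‖ ≤ Real.exp (-(α / 2) * s) := by
  set γ : ℝ → ℂ := fun t => ((Real.exp t : ℝ) : ℂ) * κ₀ with hγdef
  have hmem : ∀ t ∈ Set.Icc (0 : ℝ) s, dist (γ t) 1 < ε := by
    intro t ht
    have h1 : dist (γ t) κ₀ = Real.exp t - 1 := by
      rw [hγdef]
      simp only [dist_eq_norm]
      rw [show ((Real.exp t : ℝ) : ℂ) * κ₀ - κ₀ = (((Real.exp t - 1 : ℝ)) : ℂ) * κ₀ by
        push_cast; ring]
      rw [norm_mul, hκn, mul_one, Complex.norm_real, Real.norm_eq_abs,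
        _root_.abs_of_nonneg (by nlinarith [Real.one_le_exp ht.1])]
    calc dist (γ t) 1 ≤ dist (γ t) κ₀ + dist κ₀ 1 := dist_triangle _ _ _
      _ < (Real.exp t - 1) + ε / 2 := by rw [h1]; linarith
      _ ≤ (Real.exp s - 1) + ε / 2 := by
          have := Real.exp_le_exp.mpr ht.2; linarith
      _ < ε := by linarith
  have hγ : ∀ t : ℝ, HasDerivAt γ (γ t) t := by
    intro t
    have h1 : HasDerivAt (fun t : ℝ => ((Real.exp t : ℝ) : ℂ)) ((Real.exp t : ℝ) : ℂ) t :=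
      Complex.ofRealCLM.hasFDerivAt.comp_hasDerivAt t (Real.hasDerivAt_exp t)
    exact h1.mul_const κ₀
  set f : ℝ → ℂ := fun t => G (γ t) with hfdef
  have hf : ∀ t ∈ Set.Icc (0 : ℝ) s, HasDerivAt f (γ t * (D (γ t))) t := by
    intro t ht
    have := HasDerivAt.scomp (𝕜 := ℝ) (𝕜' := ℂ) t (hG (γ t) (hmem t ht)) (hγ t)
    simp only [Function.comp_def, smul_eq_mul] at this
    exact this
  set ψ : ℝ → ℝ := fun t => Complex.normSq (f t) with hψdef
  have hψ : ∀ t ∈ Set.Icc (0 : ℝ) s,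
      HasDerivAt ψ (2 * ((starRingEnd ℂ) (f t) * (γ t * D (γ t))).re) t := by
    intro t ht
    have hre : HasDerivAt (fun t => (f t).re) ((γ t * D (γ t)).re) t :=
      Complex.reCLM.hasFDerivAt.comp_hasDerivAt t (hf t ht)
    have him : HasDerivAt (fun t => (f t).im) ((γ t * D (γ t)).im) t :=
      Complex.imCLM.hasFDerivAt.comp_hasDerivAt t (hf t ht)
    have := (hre.mul hre).add (him.mul him)
    have heq : ∀ u : ℝ, Complex.normSq (f u) = (f u).re * (f u).re + (f u).im * (f u).im := by
      intro u; rw [Complex.normSq_apply]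
    have h2 : HasDerivAt ψ ((γ t * D (γ t)).re * (f t).re + (f t).re * (γ t * D (γ t)).re +
        ((γ t * D (γ t)).im * (f t).im + (f t).im * (γ t * D (γ t)).im)) t := by
      apply HasDerivAt.congr_of_eventuallyEq this
      filter_upwards with u using (heq u)
    convert h2 using 1
    simp only [Complex.mul_re, Complex.conj_re, Complex.conj_im]
    ring
  have hψbound : ∀ t ∈ Set.Icc (0 : ℝ) s,
      2 * ((starRingEnd ℂ) (f t) * (γ t * D (γ t))).re ≤ -α * ψ t := by
    intro t ht
    obtain ⟨hGne, hRe⟩ := hball (γ t) (hmem t ht)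
    have hkey : (starRingEnd ℂ) (f t) * (γ t * D (γ t)) =
        ((Complex.normSq (f t) : ℝ) : ℂ) * (γ t * D (γ t) / G (γ t)) := by
      rw [hfdef]
      have : ((Complex.normSq (G (γ t)) : ℝ) : ℂ) = (starRingEnd ℂ) (G (γ t)) * G (γ t) :=
        Complex.normSq_eq_conj_mul_self
      field_simp [this]
      rw [this]; ring
    rw [hkey]
    have hre : (((Complex.normSq (f t) : ℝ) : ℂ) * (γ t * D (γ t) / G (γ t))).re =
        Complex.normSq (f t) * (γ t * D (γ t) / G (γ t)).re := by
      simp [Complex.mul_re]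
    rw [hre]
    have hψnn : 0 ≤ ψ t := Complex.normSq_nonneg _
    have h3 : γ t * D (γ t) / G (γ t) = γ t * D (γ t) / G (γ t) := rfl
    have := mul_le_mul_of_nonneg_left hRe hψnn
    calc 2 * (Complex.normSq (f t) * (γ t * D (γ t) / G (γ t)).re)
        ≤ 2 * (ψ t * (-α / 2)) := by
          apply mul_le_mul_of_nonneg_left _ (by norm_num)
          exact this
      _ = -α * ψ t := by ring
  -- χ is antitone
  set χ : ℝ → ℝ := fun t => ψ t * Real.exp (α * t) with hχdef
  have hχ : ∀ t ∈ Set.Icc (0 : ℝ) s, HasDerivAt χ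
      (2 * ((starRingEnd ℂ) (f t) * (γ t * D (γ t))).re * Real.exp (α * t) +
        ψ t * (Real.exp (α * t) * α)) t := by
    intro t ht
    have h4 := (hψ t ht).mul (((hasDerivAt_id t).const_mul α).exp)
    simp only [id_eq, mul_one] at h4
    exact h4
  have hanti : AntitoneOn χ (Set.Icc 0 s) := by
    apply antitoneOn_of_deriv_nonpos (convex_Icc 0 s)
    · intro t ht
      exact (hχ t ht).continuousAt.continuousWithinAt
    · intro t ht
      rw [interior_Icc] at ht
      exact (hχ t (Set.mem_Icc_of_Ioo ht)).differentiableAt.differentiableWithinAt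
    · intro t ht
      rw [interior_Icc] at ht
      have ht' := Set.mem_Icc_of_Ioo ht
      rw [(hχ t ht').deriv]
      have h1 := hψbound t ht'
      have h2 : (0:ℝ) < Real.exp (α * t) := Real.exp_pos _
      nlinarith [Complex.normSq_nonneg (f t)]
  have hχs : χ s ≤ χ 0 := hanti (Set.left_mem_Icc.mpr hs.le)
    (Set.right_mem_Icc.mpr hs.le) hs.le
  have hχ0 : χ 0 ≤ 1 := by
    rw [hχdef]
    simp only [mul_zero, Real.exp_zero, mul_one]
    have : ψ 0 = ‖G κ₀‖ ^ 2 := by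
      rw [hψdef, hfdef, hγdef]
      simp only [Real.exp_zero, Complex.ofReal_one, one_mul]
      rw [← Complex.sq_norm]
    rw [this]
    nlinarith [norm_nonneg (G κ₀)]
  have hψs : ψ s ≤ Real.exp (-α * s) := by
    have : ψ s = χ s * Real.exp (-α * s) := by
      rw [hχdef]
      simp only
      rw [mul_assoc, ← Real.exp_add]
      simp
    rw [this]
    calc χ s * Real.exp (-α * s) ≤ 1 * Real.exp (-α * s) := by
          apply mul_le_mul_of_nonneg_right (le_trans hχs hχ0) (Real.exp_pos _).le
      _ = Real.exp (-α * s) := one_mul _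
  have : ‖G ((Real.exp s : ℂ) * κ₀)‖ ^ 2 ≤ Real.exp (-(α / 2) * s) ^ 2 := by
    rw [← Real.exp_nat_mul]
    have h1 : ‖G ((Real.exp s : ℂ) * κ₀)‖ ^ 2 = ψ s := Complex.sq_norm _
    rw [h1]
    calc ψ s ≤ Real.exp (-α * s) := hψs
      _ = Real.exp ((2 : ℕ) * (-(α / 2) * s)) := by norm_num; ring_nf
  exact pow_le_pow_iff_left₀ (norm_nonneg _) (Real.exp_pos _).le (by norm_num) |>.mp this

lemma Dsym_one (r p : ℕ) (a0 : ℤ → ℂ) (α β : ℝ) (μ : ℕ) (hα : 0 < α)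
    (hG1 : symbol r p a0 1 = 1)
    (g : ℝ → ℂ) (hg : g =O[nhds 0] fun ξ : ℝ => ξ ^ (2 * μ + 1)) (hμ : 1 ≤ μ)
    (hev : ∀ᶠ ξ : ℝ in nhds 0, symbol r p a0 (Complex.exp (Complex.I * ξ)) =
      Complex.exp (-(Complex.I) * (α : ℂ) * (ξ : ℂ) - (β : ℂ) * (ξ : ℂ) ^ (2 * μ) + g ξ)) :
    Dsym r p a0 1 = -(α : ℂ) := by
  set W : ℝ → ℂ := fun ξ =>
    -(Complex.I) * (α : ℂ) * (ξ : ℂ) - (β : ℂ) * (ξ : ℂ) ^ (2 * μ) + g ξ with hWdef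
  have hcast : Filter.Tendsto (fun ξ : ℝ => (ξ : ℂ)) (nhdsWithin 0 {0}ᶜ) (nhds 0) := by
    have := (Complex.continuous_ofReal.tendsto 0).mono_left
      (nhdsWithin_le_nhds (s := {(0:ℝ)}ᶜ))
    simpa using this
  -- g ξ / ξ → 0
  have h0 : Filter.Tendsto (fun ξ : ℝ => g ξ / (ξ : ℂ)) (nhdsWithin 0 {0}ᶜ) (nhds 0) := by
    have hO := hg.mono (nhdsWithin_le_nhds (s := {(0:ℝ)}ᶜ))
    have hinv : (fun ξ : ℝ => ((ξ : ℂ))⁻¹) =O[nhdsWithin 0 {0}ᶜ] (fun ξ : ℝ => ξ⁻¹) := by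
      apply Asymptotics.isBigO_of_le
      intro x
      simp [norm_inv]
    have hmul := hO.mul hinv
    have hcongr : (fun ξ : ℝ => ξ ^ (2 * μ + 1) * ξ⁻¹) =ᶠ[nhdsWithin 0 {0}ᶜ]
        (fun ξ : ℝ => ξ ^ (2 * μ)) := by
      filter_upwards [self_mem_nhdsWithin] with ξ hξ
      have hξ' : ξ ≠ 0 := hξ
      field_simp [pow_succ]
      ring
    have hO2 : (fun ξ : ℝ => g ξ * ((ξ : ℂ))⁻¹) =O[nhdsWithin 0 {0}ᶜ]
        (fun ξ : ℝ => ξ ^ (2 * μ)) := hmul.congr' (by rfl) hcongr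
    have hpow : Filter.Tendsto (fun ξ : ℝ => ξ ^ (2 * μ)) (nhdsWithin 0 {0}ᶜ) (nhds 0) := by
      have := ((continuous_pow (2 * μ)).tendsto (0:ℝ)).mono_left
        (nhdsWithin_le_nhds (s := {(0:ℝ)}ᶜ))
      simpa [zero_pow (by omega : 2 * μ ≠ 0)] using this
    have := hO2.trans_tendsto hpow
    simpa [div_eq_mul_inv] using this
  -- W ξ / ξ → -I α
  have h1 : Filter.Tendsto (fun ξ : ℝ => W ξ / (ξ : ℂ)) (nhdsWithin 0 {0}ᶜ)
      (nhds (-(Complex.I) * (α : ℂ))) := by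
    have heq : (fun ξ : ℝ => W ξ / (ξ : ℂ)) =ᶠ[nhdsWithin 0 {0}ᶜ] (fun ξ : ℝ =>
        -(Complex.I) * (α : ℂ) + (-(β : ℂ) * (ξ : ℂ) ^ (2 * μ - 1)) + g ξ / (ξ : ℂ)) := by
      filter_upwards [self_mem_nhdsWithin] with ξ hξ
      have hξ' : ((ξ : ℂ)) ≠ 0 := Complex.ofReal_ne_zero.mpr hξ
      rw [hWdef]
      simp only
      rw [show 2 * μ = (2 * μ - 1) + 1 by omega, pow_succ]
      rw [Nat.add_sub_cancel]
      field_simp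
      ring
    have t2 : Filter.Tendsto (fun ξ : ℝ => -(β : ℂ) * (ξ : ℂ) ^ (2 * μ - 1))
        (nhdsWithin 0 {0}ᶜ) (nhds 0) := by
      have hc : Continuous (fun ξ : ℝ => -(β : ℂ) * (ξ : ℂ) ^ (2 * μ - 1)) := by
        continuity
      have := (hc.tendsto 0).mono_left (nhdsWithin_le_nhds (s := {(0:ℝ)}ᶜ))
      simpa [zero_pow (by omega : 2 * μ - 1 ≠ 0)] using this
    have hconst : Filter.Tendsto (fun _ : ℝ => -(Complex.I) * (α : ℂ))
        (nhdsWithin 0 {0}ᶜ) (nhds (-(Complex.I) * (α : ℂ))) := tendsto_const_nhds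
    have := (hconst.add t2).add h0
    apply Filter.Tendsto.congr' heq.symm
    simpa using this
  have hIαne : -(Complex.I) * (α : ℂ) ≠ 0 := by
    apply mul_ne_zero
    · simpa using Complex.I_ne_zero
    · exact_mod_cast hα.ne'
  have hWne : ∀ᶠ ξ : ℝ in nhdsWithin 0 {0}ᶜ, W ξ ≠ 0 := by
    filter_upwards [h1.eventually_ne hIαne] with ξ hξ
    intro h
    rw [h, zero_div] at hξ
    exact hξ rfl
  have hWto0 : Filter.Tendsto W (nhdsWithin 0 {0}ᶜ) (nhds 0) := by
    have := h1.mul hcast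
    rw [mul_zero] at this
    apply this.congr'
    filter_upwards [self_mem_nhdsWithin] with ξ hξ
    have hξ' : ((ξ : ℂ)) ≠ 0 := Complex.ofReal_ne_zero.mpr hξ
    field_simp
  have hWts : Filter.Tendsto W (nhdsWithin 0 {0}ᶜ) (nhdsWithin 0 {0}ᶜ) := by
    rw [tendsto_nhdsWithin_iff]
    exact ⟨hWto0, hWne⟩
  have hslope_exp : Filter.Tendsto (fun z : ℂ => (Complex.exp z - 1) / z)
      (nhdsWithin 0 {0}ᶜ) (nhds 1) := by
    have := (Complex.hasDerivAt_exp 0)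
    rw [hasDerivAt_iff_tendsto_slope] at this
    rw [Complex.exp_zero] at this
    apply this.congr
    intro z
    rw [slope_def_field]
    simp [Complex.exp_zero, div_eq_mul_inv]
  have h4 := hslope_exp.comp hWts
  have h5 := h1.mul h4
  rw [mul_one] at h5
  -- Φ and its derivative
  set Φ : ℝ → ℂ := fun ξ => symbol r p a0 (Complex.exp (Complex.I * ξ)) with hΦdef
  have hΦ0 : Φ 0 = 1 := by
    rw [hΦdef]
    simp [hG1]
  have hΦderiv : HasDerivAt Φ (Complex.I * Dsym r p a0 1) 0 := by
    have hin : HasDerivAt (fun ξ : ℝ => Complex.I * (ξ : ℂ)) Complex.I 0 := by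
      have h1' : HasDerivAt (fun ξ : ℝ => ((ξ : ℝ) : ℂ)) 1 0 := by
        exact (hasDerivAt_id (0:ℝ)).ofReal_comp
      simpa using h1'.const_mul Complex.I
    have hcurve : HasDerivAt (fun ξ : ℝ => Complex.exp (Complex.I * (ξ : ℂ))) Complex.I 0 := by
      have := hin.cexp
      simpa using this
    have hD := hasDerivAt_symbol r p a0 1 one_ne_zero
    have hc0 : Complex.exp (Complex.I * ((0 : ℝ) : ℂ)) = 1 := by simp
    rw [← hc0] at hD
    have := HasDerivAt.scomp (𝕜 := ℝ) (𝕜' := ℂ) 0 hD hcurve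
    simp [Function.comp, smul_eq_mul] at this
    exact this
  have h7 : Filter.Tendsto (slope Φ 0) (nhdsWithin 0 {0}ᶜ)
      (nhds (Complex.I * Dsym r p a0 1)) := hasDerivAt_iff_tendsto_slope.mp hΦderiv
  have h6 : Filter.Tendsto (slope Φ 0) (nhdsWithin 0 {0}ᶜ)
      (nhds (-(Complex.I) * (α : ℂ))) := by
    apply h5.congr'
    have hev' : ∀ᶠ ξ : ℝ in nhdsWithin 0 {0}ᶜ, Φ ξ = Complex.exp (W ξ) :=
      (hev.filter_mono (nhdsWithin_le_nhds (s := {(0:ℝ)}ᶜ)))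
    filter_upwards [self_mem_nhdsWithin, hWne, hev'] with ξ hξ hWξ hΦξ
    have hξ' : ((ξ : ℂ)) ≠ 0 := Complex.ofReal_ne_zero.mpr hξ
    show W ξ / (ξ : ℂ) * ((fun z => (Complex.exp z - 1) / z) ∘ W) ξ = slope Φ 0 ξ
    simp only [Function.comp_apply, slope, vsub_eq_sub, sub_zero, hΦ0, hΦξ,
      Complex.real_smul, Complex.ofReal_inv]
    field_simp
  have := tendsto_nhds_unique h7 h6
  have hmul : Complex.I * Dsym r p a0 1 = Complex.I * (-(α : ℂ)) := by
    rw [this]; ring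
  exact mul_left_cancel₀ Complex.I_ne_zero hmul

lemma circle_sup (r p : ℕ) (a0 : ℤ → ℂ) (α : ℝ) (hα : 0 < α)
    (hG1 : symbol r p a0 1 = 1)
    (hD1 : Dsym r p a0 1 = -(α : ℂ))
    (hFlt : ∀ κ : ℂ, ‖κ‖ = 1 → κ ≠ 1 → ‖symbol r p a0 κ‖ < 1) :
    ∃ ρ : ℝ, 1 ≤ ρ ∧ ∃ M : ℝ, 0 < M ∧ M < 1 ∧
      ∀ κ : ℂ, ‖κ‖ = ρ → ‖symbol r p a0 κ‖ ≤ M := by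
  set G := symbol r p a0 with hGdef
  set D := Dsym r p a0 with hDdef
  -- continuity of R at 1 and the small ball
  have hG1ne : G 1 ≠ 0 := by rw [hG1]; exact one_ne_zero
  have hGcont1 : ContinuousAt G 1 := (hasDerivAt_symbol r p a0 1 one_ne_zero).continuousAt
  have hDcont1 : ContinuousAt D 1 := continuousAt_Dsym r p a0 1 one_ne_zero
  have hRcont : ContinuousAt (fun κ : ℂ => (κ * D κ / G κ).re) 1 := by
    apply Complex.continuous_re.continuousAt.comp
    exact (continuousAt_id.mul hDcont1).div hGcont1 hG1ne
  have hR1 : ((1 : ℂ) * D 1 / G 1).re = -α := by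
    rw [hD1, hG1]
    simp
  have hev1 : ∀ᶠ κ : ℂ in nhds 1, (κ * D κ / G κ).re < -α / 2 := by
    have hv : (fun κ : ℂ => (κ * D κ / G κ).re) 1 < -α / 2 := by
      show ((1 : ℂ) * D 1 / G 1).re < -α / 2
      rw [hR1]; linarith
    exact Filter.Tendsto.eventually_lt_const hv hRcont
  have hev2 : ∀ᶠ κ : ℂ in nhds 1, G κ ≠ 0 := hGcont1.eventually_ne hG1ne
  obtain ⟨ε₀, hε₀, hball₀⟩ := Metric.eventually_nhds_iff.mp (hev1.and hev2)
  set ε : ℝ := min ε₀ 1 with hεdef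
  have hε : 0 < ε := lt_min hε₀ one_pos
  have hε1 : ε ≤ 1 := min_le_right _ _
  have hballne : ∀ z : ℂ, dist z 1 < ε → z ≠ 0 := by
    intro z hz h0
    rw [h0] at hz
    have : dist (0 : ℂ) 1 = 1 := by simp [dist_eq_norm]
    rw [this] at hz
    linarith [lt_of_lt_of_le hz hε1]
  have hball : ∀ z : ℂ, dist z 1 < ε →
      HasDerivAt G (D z) z ∧ G z ≠ 0 ∧ (z * D z / G z).re ≤ -α / 2 := by
    intro z hz
    have h := hball₀ (lt_of_lt_of_le hz (min_le_left _ _))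
    exact ⟨hasDerivAt_symbol r p a0 z (hballne z hz), h.2, h.1.le⟩
  -- far part: compact max on the unit circle away from 1
  set A : Set ℂ := {κ : ℂ | ‖κ‖ = 1 ∧ ε / 2 ≤ dist κ 1} with hAdef
  have hAclosed : IsClosed A := by
    apply IsClosed.inter
    · exact isClosed_eq continuous_norm continuous_const
    · exact isClosed_le continuous_const (continuous_id.dist continuous_const)
  have hAbdd : Bornology.IsBounded A := by
    apply (Metric.isBounded_closedBall (x := (0:ℂ)) (r := 1)).subset
    intro κ hκ
    simp only [Metric.mem_closedBall, dist_zero_right]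
    exact le_of_eq hκ.1
  have hAcomp : IsCompact A := isCompact_of_isClosed_isBounded hAclosed hAbdd
  have hAne : A.Nonempty := by
    refine ⟨-1, ?_, ?_⟩
    · simp
    · have : dist (-1 : ℂ) 1 = 2 := by
        rw [dist_eq_norm]
        norm_num
      rw [this]
      linarith
  have hGcontA : ContinuousOn (fun κ => ‖G κ‖) A := by
    intro κ hκ
    have hκne : κ ≠ 0 := by
      intro h
      rw [h] at hκ
      simp [hAdef] at hκ
    exact ((hasDerivAt_symbol r p a0 κ hκne).continuousAt.norm).continuousWithinAt
  obtain ⟨κs, hκsA, hmax⟩ := hAcomp.exists_isMaxOn hAne hGcontA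
  have hκs1 : κs ≠ 1 := by
    intro h
    have := hκsA.2
    rw [h] at this
    simp at this
    linarith
  set δ : ℝ := 1 - ‖G κs‖ with hδdef
  have hδ : 0 < δ := by
    have := hFlt κs hκsA.1 hκs1
    simp only [hδdef]
    linarith
  -- uniform continuity on the annulus
  set K : Set ℂ := {z : ℂ | 1 ≤ ‖z‖ ∧ ‖z‖ ≤ 2} with hKdef
  have hKcomp : IsCompact K := by
    apply isCompact_of_isClosed_isBounded
    · exact IsClosed.inter (isClosed_le continuous_const continuous_norm)
        (isClosed_le continuous_norm continuous_const)
    · apply (Metric.isBounded_closedBall (x := (0:ℂ)) (r := 2)).subset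
      intro z hz
      simp only [Metric.mem_closedBall, dist_zero_right]
      exact hz.2
  have hGcontK : ContinuousOn G K := by
    intro z hz
    have hzne : z ≠ 0 := by
      intro h
      rw [h] at hz
      norm_num [hKdef] at hz
    exact (hasDerivAt_symbol r p a0 z hzne).continuousAt.continuousWithinAt
  have hUC := hKcomp.uniformContinuousOn_of_continuous hGcontK
  rw [Metric.uniformContinuousOn_iff] at hUC
  obtain ⟨d, hd, hUC'⟩ := hUC (δ / 2) (by linarith)
  -- choose s
  set d' : ℝ := min (ε / 2) (min d 1) with hd'def
  have hd' : 0 < d' := lt_min (by linarith) (lt_min hd one_pos)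
  have hd'1 : d' ≤ 1 := le_trans (min_le_right _ _) (min_le_right _ _)
  have hd'd : d' ≤ d := le_trans (min_le_right _ _) (min_le_left _ _)
  have hd'ε : d' ≤ ε / 2 := min_le_left _ _
  set s : ℝ := Real.log (1 + d' / 2) with hsdef
  have hs : 0 < s := Real.log_pos (by linarith)
  set ρ : ℝ := Real.exp s with hρdef
  have hexps : ρ = 1 + d' / 2 := Real.exp_log (by linarith)
  have hρ1 : 1 ≤ ρ := by rw [hexps]; linarith
  have hρ2 : ρ ≤ 2 := by rw [hexps]; linarith
  set M : ℝ := max (Real.exp (-(α / 2) * s)) (1 - δ / 2) with hMdef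
  refine ⟨ρ, hρ1, M, ?_, ?_, ?_⟩
  · exact lt_of_lt_of_le (Real.exp_pos _) (le_max_left _ _)
  · apply max_lt
    · rw [← Real.exp_zero]
      apply Real.exp_lt_exp.mpr
      nlinarith
    · linarith
  · intro κ hκ
    have hρne : ((ρ : ℝ) : ℂ) ≠ 0 := by
      simp only [ne_eq, Complex.ofReal_eq_zero]
      linarith
    set κ₀ : ℂ := ((ρ⁻¹ : ℝ) : ℂ) * κ with hκ₀def
    have hκ₀n : ‖κ₀‖ = 1 := by
      rw [hκ₀def, norm_mul, Complex.norm_real, Real.norm_eq_abs,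
        _root_.abs_of_nonneg (by positivity : (0:ℝ) ≤ ρ⁻¹), hκ]
      field_simp
    have hκeq : ((ρ : ℝ) : ℂ) * κ₀ = κ := by
      rw [hκ₀def]
      rw [← mul_assoc, ← Complex.ofReal_mul]
      rw [mul_inv_cancel₀ (by linarith : ρ ≠ 0)]
      simp
    by_cases hc : dist κ₀ 1 < ε / 2
    · have hG0 : ‖G κ₀‖ ≤ 1 := by
        by_cases h1 : κ₀ = 1
        · rw [h1, hG1]; norm_num
        · exact (hFlt κ₀ hκ₀n h1).le
      have := gronwall_ray G D α hα ε hε (fun z hz => (hball z hz).1)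
        (fun z hz => ⟨(hball z hz).2.1, (hball z hz).2.2⟩) s hs
        (by rw [show Real.exp s = 1 + d' / 2 from hexps]; linarith) κ₀ hκ₀n hc hG0
      rw [show ((Real.exp s : ℝ) : ℂ) * κ₀ = κ from hκeq] at this
      exact le_trans this (le_max_left _ _)
    · push_neg at hc
      have hκ₀K : κ₀ ∈ K := by
        simp only [hKdef, Set.mem_setOf_eq, hκ₀n]
        norm_num
      have hκK : κ ∈ K := by
        simp only [hKdef, Set.mem_setOf_eq, hκ]
        exact ⟨hρ1, hρ2⟩
      have hdistκ : dist κ κ₀ < d := by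
        rw [dist_eq_norm, ← hκeq, show ((ρ:ℝ):ℂ) * κ₀ - κ₀ = (((ρ - 1 : ℝ)):ℂ) * κ₀ from by
          push_cast; ring, norm_mul, Complex.norm_real, Real.norm_eq_abs, hκ₀n, mul_one,
          _root_.abs_of_nonneg (by linarith : (0:ℝ) ≤ ρ - 1)]
        have : ρ - 1 = d' / 2 := by rw [hexps]; ring
        rw [this]
        linarith
      have hG2 := hUC' κ hκK κ₀ hκ₀K hdistκ
      have hGκ₀ : ‖G κ₀‖ ≤ 1 - δ := by
        have h5 := hmax ⟨hκ₀n, hc⟩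
        simp only [Set.mem_setOf_eq] at h5
        simp only [hδdef]
        linarith
      have : ‖G κ‖ ≤ ‖G κ₀‖ + dist (G κ) (G κ₀) := by
        rw [dist_eq_norm]
        calc ‖G κ‖ = ‖G κ₀ + (G κ - G κ₀)‖ := by ring_nf
          _ ≤ ‖G κ₀‖ + ‖G κ - G κ₀‖ := norm_add_le _ _
      have hfinal : ‖G κ‖ ≤ 1 - δ / 2 := by linarith [hG2, hGκ₀, this]
      exact le_trans hfinal (le_max_right _ _)

/-- Lemma 7: in the explicit case with `K = 1` and `α > 0`, the temporal Green's function
`𝒢ⁿ = ℒⁿ δ` satisfies `|𝒢ⁿ_j| ≤ C e^{-nη - c|j|}` for `-np ≤ j ≤ 0`. -/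
theorem temporal_green_left_bound
    (r p : ℕ) (hrp : 1 ≤ p + r) (a0 a1 : ℤ → ℂ)
    (α β : ℝ) (μ : ℕ) (hα : 0 < α) (hβ : 0 < β) (hμ : 1 ≤ μ)
    (L : Seq2 →L[ℂ] Seq2)
    -- Assumption 1
    (hQ1_ne : ∀ κ : ℂ, ‖κ‖ = 1 → symbol r p a1 κ ≠ 0)
    (hQ1_index : (2 * (Real.pi : ℂ) * Complex.I)⁻¹ *
      (∮ κ in C(0, 1), deriv (symbol r p a1) κ / symbol r p a1 κ) = 0)
    -- `ℒ = Q₁⁻¹ Q₀` is characterized by `Q₁ ∘ ℒ = Q₀`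
    (hL : ∀ (u : Seq2) (j : ℤ),
      convAct r p a1 (fun i => L u i) j = convAct r p a0 (fun i => u i) j)
    -- explicit case: `Q₁ = I`
    (hQ1id : ∀ ℓ ∈ Finset.Icc (-(r : ℤ)) (p : ℤ), a1 ℓ = if ℓ = 0 then 1 else 0)
    -- Assumption 2 specialized to `K = 1`, `κ̲₁ = 1`, `z̲₁ = F(1) = 1`
    (hF1 : Fsym r p a0 a1 1 = 1)
    (hFlt : ∀ κ : ℂ, ‖κ‖ = 1 → κ ≠ 1 → ‖Fsym r p a0 a1 κ‖ < 1)
    (hexp : ∃ g : ℝ → ℂ, (g =O[nhds 0] fun ξ : ℝ => ξ ^ (2 * μ + 1)) ∧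
      ∀ᶠ ξ : ℝ in nhds 0, Fsym r p a0 a1 (Complex.exp (Complex.I * ξ)) =
        Complex.exp (-(Complex.I) * (α : ℂ) * (ξ : ℂ)
          - (β : ℂ) * (ξ : ℂ) ^ (2 * μ) + g ξ))
    -- Assumption 3
    (hA : ∀ z : ℂ, 1 ≤ ‖z‖ → Acoef a0 a1 (-(r : ℤ)) z ≠ 0 ∧ Acoef a0 a1 (p : ℤ) z ≠ 0)
    : ∃ η > (0 : ℝ), ∃ C > (0 : ℝ), ∃ c > (0 : ℝ), ∀ n : ℕ, 1 ≤ n → ∀ j : ℤ,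
      -(p : ℤ) * n ≤ j → j ≤ 0 →
      ‖((L ^ n) dirac) j‖ ≤ C * Real.exp (-(n : ℝ) * η - c * |(j : ℝ)|) := by
  classical
  -- `Q̂₁ ≡ 1`
  have hsymb1 : ∀ κ : ℂ, symbol r p a1 κ = 1 := by
    intro κ
    unfold symbol
    rw [Finset.sum_congr rfl (fun ℓ hℓ => by rw [hQ1id ℓ hℓ])]
    simp only [ite_mul, one_mul, zero_mul]
    rw [Finset.sum_ite_eq' (Finset.Icc (-(r : ℤ)) (p : ℤ)) (0 : ℤ) (fun ℓ => κ ^ ℓ)]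
    rw [if_pos (Finset.mem_Icc.mpr ⟨neg_nonpos.mpr (Int.natCast_nonneg r),
      Int.natCast_nonneg p⟩)]
    exact zpow_zero κ
  have hG1 : symbol r p a0 1 = 1 := by
    have := hF1
    unfold Fsym at this
    rwa [hsymb1, div_one] at this
  have hGlt : ∀ κ : ℂ, ‖κ‖ = 1 → κ ≠ 1 → ‖symbol r p a0 κ‖ < 1 := by
    intro κ hκ hκ1
    have := hFlt κ hκ hκ1
    unfold Fsym at this
    rwa [hsymb1, div_one] at this
  obtain ⟨g, hg, hev⟩ := hexp
  have hev' : ∀ᶠ ξ : ℝ in nhds 0, symbol r p a0 (Complex.exp (Complex.I * ξ)) =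
      Complex.exp (-(Complex.I) * (α : ℂ) * (ξ : ℂ) - (β : ℂ) * (ξ : ℂ) ^ (2 * μ) + g ξ) := by
    filter_upwards [hev] with ξ hξ
    rw [← hξ]
    unfold Fsym
    rw [hsymb1, div_one]
  have hD1 : Dsym r p a0 1 = -(α : ℂ) := Dsym_one r p a0 α β μ hα hG1 g hg hμ hev'
  obtain ⟨ρ, hρ1, M, hM0, hM1, hMsup⟩ := circle_sup r p a0 α hα hG1 hD1 hGlt
  -- identify the Green's function with the convolution coefficients
  have ha1act : ∀ (v : ℤ → ℂ) (j : ℤ), convAct r p a1 v j = v j := by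
    intro v j
    unfold convAct
    rw [Finset.sum_congr rfl (fun ℓ hℓ => by rw [hQ1id ℓ hℓ])]
    simp only [ite_mul, one_mul, zero_mul]
    rw [Finset.sum_ite_eq' (Finset.Icc (-(r : ℤ)) (p : ℤ)) (0 : ℤ) (fun ℓ => v (j + ℓ))]
    rw [if_pos (Finset.mem_Icc.mpr ⟨neg_nonpos.mpr (Int.natCast_nonneg r),
      Int.natCast_nonneg p⟩)]
    simp
  have hLa0 : ∀ (u : Seq2) (j : ℤ), (L u) j = convAct r p a0 (fun i => u i) j := by
    intro u j
    rw [← hL u j, ha1act]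
  have hgreen : ∀ (n : ℕ) (j : ℤ), ((L ^ n) dirac) j = cseq r p a0 n j := by
    intro n
    induction n with
    | zero =>
      intro j
      rw [pow_zero, ContinuousLinearMap.one_apply]
      show (dirac : ℤ → ℂ) j = cseq r p a0 0 j
      unfold dirac
      by_cases h : j = 0
      · subst h
        simp [lp.single_apply, cseq]
      · simp [lp.single_apply, cseq, h]
    | succ n ih =>
      intro j
      rw [pow_succ', ContinuousLinearMap.mul_apply, hLa0]
      unfold convAct
      rw [show cseq r p a0 (n + 1) j =
        ∑ ℓ ∈ Finset.Icc (-(r : ℤ)) (p : ℤ), a0 ℓ * cseq r p a0 n (j + ℓ) from rfl]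
      exact Finset.sum_congr rfl (fun ℓ _ => by simp only [ih])
  -- conclusion
  set K : ℝ := -Real.log M with hKdef
  have hK : 0 < K := by
    rw [hKdef]
    have := Real.log_neg hM0 hM1
    linarith
  refine ⟨K / 2, by positivity, 1, one_pos, K / (2 * ((p : ℝ) + 1)), by positivity, ?_⟩
  intro n hn j hjl hj0
  have hjmem : j ∈ Finset.Icc (-(p : ℤ) * n) ((r : ℤ) * n) := by
    rw [Finset.mem_Icc]
    refine ⟨hjl, le_trans hj0 ?_⟩
    positivity
  have hbd := cseq_bound r p a0 ρ M hρ1 hM0.le hMsup n j hjmem hj0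
  rw [hgreen n j]
  refine le_trans hbd ?_
  rw [one_mul]
  have hMexp : M ^ n = Real.exp ((n : ℝ) * Real.log M) := by
    rw [Real.exp_nat_mul, Real.exp_log hM0]
  rw [hMexp]
  apply Real.exp_le_exp.mpr
  have habs : |(j : ℝ)| ≤ (p : ℝ) * (n : ℝ) := by
    rw [abs_of_nonpos (by exact_mod_cast hj0)]
    have : (-(p : ℤ) * n : ℤ) ≤ j := hjl
    have h2 : ((-(p : ℤ) * n : ℤ) : ℝ) ≤ (j : ℝ) := by exact_mod_cast this
    push_cast at h2
    linarith
  have hlog : Real.log M = -K := by rw [hKdef]; ring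
  rw [hlog]
  have hp1 : (0 : ℝ) < (p : ℝ) + 1 := by positivity
  have hn1 : (1 : ℝ) ≤ (n : ℝ) := by exact_mod_cast hn
  have habs0 : 0 ≤ |(j : ℝ)| := abs_nonneg _
  have hc : 0 ≤ K / (2 * ((p : ℝ) + 1)) := by positivity
  have h1 := mul_le_mul_of_nonneg_left habs hc
  have h2 : K / (2 * ((p : ℝ) + 1)) * ((p : ℝ) * (n : ℝ)) ≤ (n : ℝ) * (K / 2) := by
    rw [div_mul_eq_mul_div, div_le_iff₀ (by positivity)]
    have hn0 : (0 : ℝ) ≤ (n : ℝ) := by linarith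
    nlinarith [mul_nonneg hK.le hn0]
  nlinarith [h1, h2]
end
end

section
/- Under Assumptions 1–5 in the implicit specialization with K = 1 (Q₁ not the identity), there exist a constant L ≥ max(p, r) and constants C > 0, c > 0 such that for every integer n ≥ 1 and every j ∈ ℤ with |j| > n L, the temporal Green's function satisfies |𝒢ⁿ_j| ≤ C exp(−c |j|). -/
open scoped Classical
open Complex Filter Asymptotics Metric

noncomputable section

set_option autoImplicit false

namespace TG
open Polynomial

/-! ### elementary geometric estimates -/

lemma geom_bound (ρ : ℝ) (h0 : 0 ≤ ρ) (h1 : ρ < 1) (N : ℕ) :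
    ∑ k ∈ Finset.range N, ρ ^ k ≤ (1 - ρ)⁻¹ := by
  have hm := geom_sum_mul ρ N
  have h2 : (0:ℝ) < 1 - ρ := by linarith
  rw [inv_eq_one_div, le_div_iff₀ h2]
  nlinarith [pow_nonneg h0 N]

/-! ### the first-order difference operators and their decay properties -/

def prodOp : List ℂ → (ℤ → ℂ) → (ℤ → ℂ)
  | [], y => y
  | z :: l, y => fun j => prodOp l y (j + 1) - z * prodOp l y j

lemma prodOp_bound (Z : ℝ) : ∀ (l : List ℂ), (∀ z ∈ l, ‖z‖ ≤ Z) →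
    ∀ (y : ℤ → ℂ) (M : ℝ), (∀ j, ‖y j‖ ≤ M) → ∀ j, ‖prodOp l y j‖ ≤ (1 + Z) ^ l.length * M := by
  intro l
  induction l with
  | nil => intro _ y M hy j; simpa [prodOp] using hy j
  | cons z l ih =>
      intro hz y M hy j
      have hZ : ‖z‖ ≤ Z := hz z (by simp)
      have h1 := ih (fun w hw => hz w (by simp [hw])) y M hy (j + 1)
      have h2 := ih (fun w hw => hz w (by simp [hw])) y M hy j
      have hn : ‖prodOp (z :: l) y j‖ ≤ ‖prodOp l y (j + 1)‖ + ‖z‖ * ‖prodOp l y j‖ := by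
        calc ‖prodOp l y (j + 1) - z * prodOp l y j‖ ≤
            ‖prodOp l y (j + 1)‖ + ‖z * prodOp l y j‖ := norm_sub_le _ _
          _ = ‖prodOp l y (j + 1)‖ + ‖z‖ * ‖prodOp l y j‖ := by rw [norm_mul]
      have hM0 : 0 ≤ M := le_trans (norm_nonneg _) (hy 0)
      have hZ0 : 0 ≤ Z := le_trans (norm_nonneg z) hZ
      calc ‖prodOp (z :: l) y j‖ ≤ ‖prodOp l y (j + 1)‖ + ‖z‖ * ‖prodOp l y j‖ := hn
        _ ≤ (1 + Z) ^ l.length * M + Z * ((1 + Z) ^ l.length * M) := by gcongr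
        _ = (1 + Z) ^ (l.length + 1) * M := by ring
        _ = (1 + Z) ^ (z :: l).length * M := by rw [List.length_cons]

lemma out_decay (σ ρs : ℝ) (hσ : 1 < σ) (hρ0 : 0 < ρs) (hρ1 : ρs < 1)
    (z : ℂ) (hz : σ ≤ ‖z‖) (w : ℤ → ℂ) (M' : ℝ) (hw : ∀ j, ‖w j‖ ≤ M')
    (J : ℤ) (D : ℝ) (hD : 0 ≤ D)
    (hg : ∀ j, J ≤ j → ‖w (j+1) - z * w j‖ ≤ D * ρs ^ (j - J).toNat) :
    ∀ j, J ≤ j → ‖w j‖ ≤ (σ - ρs)⁻¹ * D * ρs ^ (j - J).toNat := by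
  intro j hj
  have hρσ : ρs < σ := lt_trans hρ1 hσ
  have hσ0 : (0:ℝ) < σ := by linarith
  have hz0 : z ≠ 0 := by
    intro h; rw [h] at hz; simp at hz; linarith
  have hM0 : 0 ≤ M' := le_trans (norm_nonneg _) (hw 0)
  set g : ℤ → ℂ := fun k => w (k+1) - z * w k with hgdef
  have key : ∀ N : ℕ, w j = z⁻¹ ^ N * w (j + N) -
      ∑ k ∈ Finset.range N, z⁻¹ ^ (k+1) * g (j + k) := by
    intro N
    induction N with
    | zero => simp
    | succ N ihN =>
        have hwN : w (j + N) = z⁻¹ * w (j + N + 1) - z⁻¹ * g (j + N) := by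
          rw [hgdef]; field_simp; ring
        have hc : (j : ℤ) + ((N:ℤ)+1) = j + N + 1 := by ring
        rw [ihN, hwN, Finset.sum_range_succ]
        push_cast [hc]
        ring
  have hzinv : ‖z⁻¹‖ ≤ σ⁻¹ := by
    rw [norm_inv]
    exact inv_anti₀ hσ0 hz
  have hσi0 : (0:ℝ) ≤ σ⁻¹ := by positivity
  have hσi1 : σ⁻¹ < 1 := by rw [inv_lt_one_iff₀]; right; exact hσ
  have hnorm : ∀ N : ℕ, ‖w j‖ ≤ σ⁻¹ ^ N * M' + (σ - ρs)⁻¹ * D * ρs ^ (j - J).toNat := by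
    intro N
    have hb : ‖∑ k ∈ Finset.range N, z⁻¹ ^ (k+1) * g (j + k)‖ ≤
        (σ - ρs)⁻¹ * D * ρs ^ (j - J).toNat := by
      have step1 : ‖∑ k ∈ Finset.range N, z⁻¹ ^ (k+1) * g (j + k)‖
          ≤ ∑ k ∈ Finset.range N, σ⁻¹ ^ (k+1) * (D * ρs ^ ((j - J).toNat + k)) := by
        refine le_trans (norm_sum_le _ _) (Finset.sum_le_sum ?_)
        intro k _
        rw [norm_mul, norm_pow]
        have h1 : ‖z⁻¹‖ ^ (k+1) ≤ σ⁻¹ ^ (k+1) := by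
          gcongr
        have h2 : ‖g (j + k)‖ ≤ D * ρs ^ ((j - J).toNat + k) := by
          have h3 := hg (j + k) (by omega)
          have he : (j + k - J).toNat = (j - J).toNat + k := by omega
          rwa [he] at h3
        exact mul_le_mul h1 h2 (norm_nonneg _) (by positivity)
      have step2 : ∑ k ∈ Finset.range N, σ⁻¹ ^ (k+1) * (D * ρs ^ ((j - J).toNat + k))
          = (σ⁻¹ * (D * ρs ^ (j - J).toNat)) * ∑ k ∈ Finset.range N, (σ⁻¹ * ρs) ^ k := by
        rw [Finset.mul_sum]
        refine Finset.sum_congr rfl fun k _ => ?_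
        rw [pow_add, pow_succ, mul_pow]
        ring
      have hsr : σ⁻¹ * ρs < 1 := by nlinarith
      have step3 : ∑ k ∈ Finset.range N, (σ⁻¹ * ρs) ^ k ≤ (1 - σ⁻¹ * ρs)⁻¹ :=
        geom_bound _ (by positivity) hsr N
      have step4 : σ⁻¹ * (1 - σ⁻¹ * ρs)⁻¹ = (σ - ρs)⁻¹ := by
        rw [← mul_inv]
        congr 1
        field_simp
      calc ‖∑ k ∈ Finset.range N, z⁻¹ ^ (k+1) * g (j + k)‖
          ≤ (σ⁻¹ * (D * ρs ^ (j - J).toNat)) * ∑ k ∈ Finset.range N, (σ⁻¹ * ρs) ^ k := by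
            rw [← step2]; exact step1
        _ ≤ (σ⁻¹ * (D * ρs ^ (j - J).toNat)) * (1 - σ⁻¹ * ρs)⁻¹ := by
            apply mul_le_mul_of_nonneg_left step3 (by positivity)
        _ = (σ - ρs)⁻¹ * D * ρs ^ (j - J).toNat := by
            rw [← step4]; ring
    have hfirst : ‖z⁻¹ ^ N * w (j + N)‖ ≤ σ⁻¹ ^ N * M' := by
      rw [norm_mul, norm_pow]
      exact mul_le_mul (by gcongr) (hw _) (norm_nonneg _) (by positivity)
    calc ‖w j‖ = ‖z⁻¹ ^ N * w (j + N) - ∑ k ∈ Finset.range N, z⁻¹ ^ (k+1) * g (j + k)‖ := by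
          rw [← key N]
      _ ≤ ‖z⁻¹ ^ N * w (j + N)‖ + ‖∑ k ∈ Finset.range N, z⁻¹ ^ (k+1) * g (j + k)‖ :=
          norm_sub_le _ _
      _ ≤ σ⁻¹ ^ N * M' + (σ - ρs)⁻¹ * D * ρs ^ (j - J).toNat := by
          exact add_le_add hfirst hb
  have hlim : Filter.Tendsto (fun N : ℕ => σ⁻¹ ^ N * M' + (σ - ρs)⁻¹ * D * ρs ^ (j - J).toNat)
      Filter.atTop (nhds ((σ - ρs)⁻¹ * D * ρs ^ (j - J).toNat)) := by
    have h1 : Filter.Tendsto (fun N : ℕ => σ⁻¹ ^ N * M') Filter.atTop (nhds 0) := by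
      simpa using (tendsto_pow_atTop_nhds_zero_of_lt_one hσi0 hσi1).mul_const M'
    simpa using h1.add tendsto_const_nhds
  exact ge_of_tendsto' hlim hnorm

lemma in_decay (ρin ρs : ℝ) (h0 : 0 ≤ ρin) (h1 : ρin < ρs) (h2 : ρs < 1)
    (z : ℂ) (hz : ‖z‖ ≤ ρin) (w : ℤ → ℂ) (M' : ℝ) (hw : ∀ j, ‖w j‖ ≤ M')
    (J : ℤ) (D : ℝ) (hD : 0 ≤ D)
    (hg : ∀ j, J ≤ j → ‖w (j+1) - z * w j‖ ≤ D * ρs ^ (j - J).toNat) :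
    ∀ j, J ≤ j → ‖w j‖ ≤ (M' + (ρs - ρin)⁻¹ * D) * ρs ^ (j - J).toNat := by
  have hρ0 : 0 < ρs := lt_of_le_of_lt h0 h1
  have hM0 : 0 ≤ M' := le_trans (norm_nonneg _) (hw 0)
  set g : ℤ → ℂ := fun k => w (k+1) - z * w k with hgdef
  have key : ∀ N : ℕ, w (J + N) = z ^ N * w J +
      ∑ k ∈ Finset.range N, z ^ (N - 1 - k) * g (J + k) := by
    intro N
    induction N with
    | zero => simp
    | succ N ihN =>
        have hwN : w (J + N + 1) = z * w (J + N) + g (J + N) := by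
          rw [hgdef]; ring
        have hc : (J : ℤ) + ((N:ℤ)+1) = J + N + 1 := by ring
        push_cast [hc]
        rw [hwN, ihN, Finset.sum_range_succ, mul_add, Finset.mul_sum]
        have hee : ∀ k ∈ Finset.range N, z * (z ^ (N - 1 - k) * g (J + k))
            = z ^ (N + 1 - 1 - k) * g (J + k) := by
          intro k hk
          rw [Finset.mem_range] at hk
          rw [← mul_assoc, ← pow_succ']
          congr 2
          omega
        rw [Finset.sum_congr rfl hee]
        simp [pow_succ]
        ring
  intro j hj
  set N : ℕ := (j - J).toNat with hN
  have hjN : j = J + N := by omega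
  have hnorm : ‖w j‖ ≤ ρin ^ N * M' + ∑ k ∈ Finset.range N, ρin ^ (N - 1 - k) * (D * ρs ^ k) := by
    rw [hjN, key N]
    refine le_trans (norm_add_le _ _) (add_le_add ?_ ?_)
    · rw [norm_mul, norm_pow]
      exact mul_le_mul (by gcongr) (hw _) (norm_nonneg _) (pow_nonneg h0 N)
    · refine le_trans (norm_sum_le _ _) (Finset.sum_le_sum fun k _ => ?_)
      rw [norm_mul, norm_pow]
      have hgk : ‖g (J + k)‖ ≤ D * ρs ^ k := by
        have h3 := hg (J + k) (by omega)
        have he : (J + k - J).toNat = k := by omega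
        rwa [he] at h3
      exact mul_le_mul (by gcongr) hgk (norm_nonneg _) (pow_nonneg h0 _)
  set q : ℝ := ρin / ρs with hq
  have hq0 : 0 ≤ q := by positivity
  have hq1 : q < 1 := by rw [hq, div_lt_one hρ0]; exact h1
  have hsum : ∑ k ∈ Finset.range N, ρin ^ (N - 1 - k) * (D * ρs ^ k)
      ≤ (ρs - ρin)⁻¹ * D * ρs ^ N := by
    rcases Nat.eq_zero_or_pos N with hN0 | hNpos
    · rw [hN0]
      simp
      have hsp : (0:ℝ) < ρs - ρin := by linarith
      positivity
    · have hin : ρin = ρs * q := by rw [hq]; field_simp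
      have hterm : ∀ k ∈ Finset.range N, ρin ^ (N - 1 - k) * (D * ρs ^ k)
          = D * ρs ^ (N - 1) * q ^ (N - 1 - k) := by
        intro k hk
        rw [Finset.mem_range] at hk
        have hNk : N - 1 - k + k = N - 1 := by omega
        calc ρin ^ (N - 1 - k) * (D * ρs ^ k)
            = (ρs * q) ^ (N - 1 - k) * (D * ρs ^ k) := by rw [← hin]
          _ = D * (ρs ^ (N - 1 - k) * ρs ^ k) * q ^ (N - 1 - k) := by
              rw [mul_pow]; ring
          _ = D * ρs ^ (N - 1) * q ^ (N - 1 - k) := by rw [← pow_add, hNk]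
      rw [Finset.sum_congr rfl hterm, ← Finset.mul_sum]
      have hrefl : ∑ k ∈ Finset.range N, q ^ (N - 1 - k) = ∑ k ∈ Finset.range N, q ^ k :=
        Finset.sum_range_reflect (fun k => q ^ k) N
      rw [hrefl]
      have hgeo := geom_bound q hq0 hq1 N
      calc D * ρs ^ (N - 1) * ∑ k ∈ Finset.range N, q ^ k
          ≤ D * ρs ^ (N - 1) * (1 - q)⁻¹ := by
            apply mul_le_mul_of_nonneg_left hgeo (by positivity)
        _ = (ρs - ρin)⁻¹ * D * ρs ^ N := by
            have hNe : N - 1 + 1 = N := by omega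
            have hps : ρs ^ N = ρs ^ (N - 1) * ρs := by rw [← pow_succ, hNe]
            have hden : ρs - ρin ≠ 0 := by linarith
            have hinv : (1 - q)⁻¹ = ρs * (ρs - ρin)⁻¹ := by
              rw [hq]
              rw [show (1 : ℝ) - ρin / ρs = (ρs - ρin) / ρs by field_simp]
              rw [inv_div]
              ring
            rw [hinv, hps]
            ring
  have hfin : ρin ^ N * M' ≤ M' * ρs ^ N := by
    rw [mul_comm]
    apply mul_le_mul_of_nonneg_left _ hM0
    gcongr
  calc ‖w j‖ ≤ ρin ^ N * M' + ∑ k ∈ Finset.range N, ρin ^ (N - 1 - k) * (D * ρs ^ k) := hnorm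
    _ ≤ M' * ρs ^ N + (ρs - ρin)⁻¹ * D * ρs ^ N := add_le_add hfin hsum
    _ = (M' + (ρs - ρin)⁻¹ * D) * ρs ^ N := by ring

lemma list_decay (ρin ρs σ Z K : ℝ)
    (h0 : 0 ≤ ρin) (h1 : ρin < ρs) (h2 : ρs < 1) (hσ : 1 < σ) (hZ : 1 ≤ Z)
    (hK1 : 1 ≤ K) (hKσ : (σ - ρs)⁻¹ ≤ K) (hKρ : (ρs - ρin)⁻¹ ≤ K) :
    ∀ (l : List ℂ), (∀ z ∈ l, ‖z‖ ≤ Z ∧ (‖z‖ ≤ ρin ∨ σ ≤ ‖z‖)) →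
    ∀ (y : ℤ → ℂ) (M : ℝ), (∀ j, ‖y j‖ ≤ M) →
    ∀ (J : ℤ) (D : ℝ), 0 ≤ D → (∀ j, J ≤ j → ‖prodOp l y j‖ ≤ D * ρs ^ (j - J).toNat) →
    ∀ j, J ≤ j → ‖y j‖ ≤ K ^ l.length * (D + (1+Z) ^ l.length * M) * ρs ^ (j - J).toNat := by
  have hρ0 : 0 < ρs := lt_of_le_of_lt h0 h1
  intro l
  induction l with
  | nil =>
      intro _ y M hy J D hD hdec j hj
      have hM0 : 0 ≤ M := le_trans (norm_nonneg _) (hy 0)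
      calc ‖y j‖ = ‖prodOp [] y j‖ := rfl
        _ ≤ D * ρs ^ (j - J).toNat := hdec j hj
        _ ≤ 1 * (D + 1 * M) * ρs ^ (j - J).toNat := by
            apply mul_le_mul_of_nonneg_right _ (by positivity)
            nlinarith
        _ = K ^ ([] : List ℂ).length * (D + (1+Z) ^ ([] : List ℂ).length * M)
              * ρs ^ (j - J).toNat := by simp
  | cons z l ih =>
      intro hroots y M hy J D hD hdec j hj
      have hM0 : 0 ≤ M := le_trans (norm_nonneg _) (hy 0)
      set w : ℤ → ℂ := prodOp l y with hw
      set M' : ℝ := (1 + Z) ^ l.length * M with hM'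
      have hwbd : ∀ k, ‖w k‖ ≤ M' :=
        prodOp_bound Z l (fun x hx => (hroots x (by simp [hx])).1) y M hy
      have hM'0 : 0 ≤ M' := le_trans (norm_nonneg _) (hwbd 0)
      have hg : ∀ k, J ≤ k → ‖w (k+1) - z * w k‖ ≤ D * ρs ^ (k - J).toNat := by
        intro k hk
        exact hdec k hk
      have hwdec : ∀ k, J ≤ k → ‖w k‖ ≤ (K * (D + M')) * ρs ^ (k - J).toNat := by
        rcases (hroots z (by simp)).2 with hin | hout
        · intro k hk
          refine le_trans (in_decay ρin ρs h0 h1 h2 z hin w M' hwbd J D hD hg k hk) ?_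
          apply mul_le_mul_of_nonneg_right _ (by positivity)
          nlinarith
        · intro k hk
          refine le_trans (out_decay σ ρs hσ hρ0 h2 z hout w M' hwbd J D hD hg k hk) ?_
          apply mul_le_mul_of_nonneg_right _ (by positivity)
          have hσρp : (0:ℝ) < σ - ρs := by linarith
          have hσρ0 : 0 ≤ (σ - ρs)⁻¹ := by positivity
          nlinarith
      have hD' : 0 ≤ K * (D + M') := by positivity
      have hres := ih (fun x hx => hroots x (by simp [hx])) y M hy J (K * (D + M')) hD'
        hwdec j hj
      refine le_trans hres ?_
      apply mul_le_mul_of_nonneg_right _ (by positivity)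
      have hKl : (0:ℝ) ≤ K ^ l.length := by positivity
      have h2Z : (2:ℝ) ≤ 1 + Z := by linarith
      have hZl : (0:ℝ) ≤ (1+Z) ^ l.length := by positivity
      calc K ^ l.length * (K * (D + M') + (1+Z) ^ l.length * M)
          ≤ K ^ l.length * (K * (D + M') + K * ((1+Z) ^ l.length * M)) := by
            have : (1:ℝ) * ((1+Z) ^ l.length * M) ≤ K * ((1+Z) ^ l.length * M) := by
              apply mul_le_mul_of_nonneg_right hK1 (by positivity)
            nlinarith
        _ = K ^ (l.length + 1) * (D + M' + (1+Z) ^ l.length * M) := by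
            rw [pow_succ]; ring
        _ ≤ K ^ (l.length + 1) * (D + (1+Z) ^ (l.length + 1) * M) := by
            apply mul_le_mul_of_nonneg_left _ (by positivity)
            have : M' + (1+Z) ^ l.length * M ≤ (1+Z) ^ (l.length + 1) * M := by
              rw [hM', pow_succ]
              nlinarith
            linarith
        _ = K ^ (z :: l).length * (D + (1+Z) ^ (z :: l).length * M) := by
            rw [List.length_cons]

/-! ### the shift operator and polynomial functional calculus -/

def shiftL : (ℤ → ℂ) →ₗ[ℂ] (ℤ → ℂ) where
  toFun u := fun j => u (j + 1)
  map_add' _ _ := rfl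
  map_smul' _ _ := rfl

lemma shiftL_pow (t : ℕ) (u : ℤ → ℂ) (j : ℤ) : ((shiftL ^ t) u) j = u (j + t) := by
  induction t generalizing u j with
  | zero => simp
  | succ n ihn =>
      rw [pow_succ']
      have h : ((shiftL * shiftL ^ n) u) j = ((shiftL ^ n) u) (j + 1) := rfl
      rw [h, ihn]
      congr 1
      push_cast
      ring

lemma prodOp_eq_aeval (l : List ℂ) (y : ℤ → ℂ) :
    prodOp l y = (Polynomial.aeval shiftL (l.map (fun z => X - C z)).prod) y := by
  induction l with
  | nil => simp [prodOp]
  | cons z l ih =>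
      have hpr : ((z :: l).map (fun z => X - C z)).prod
          = (X - C z) * (l.map (fun z => X - C z)).prod := by simp
      rw [hpr, map_mul]
      funext j
      show prodOp l y (j+1) - z * prodOp l y j = _
      rw [ih]
      have hz : (Polynomial.aeval shiftL (X - C z)) = shiftL - (z : ℂ) • (1 : Module.End ℂ (ℤ → ℂ)) := by
        simp [Polynomial.aeval_X, Polynomial.aeval_C, Algebra.algebraMap_eq_smul_one]
      rw [Module.End.mul_apply, hz]
      simp [LinearMap.sub_apply, LinearMap.smul_apply, shiftL]

/-- the polynomial `∑_{t=0}^{P+R} a(t-R) X^t` attached to convolution coefficients. -/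
def Ppoly (R P : ℕ) (a : ℤ → ℂ) : ℂ[X] :=
  ∑ t ∈ Finset.range (P + R + 1), Polynomial.monomial t (a ((t : ℤ) - R))

lemma Ppoly_coeff (R P : ℕ) (a : ℤ → ℂ) (t : ℕ) (ht : t ≤ P + R) :
    (Ppoly R P a).coeff t = a ((t : ℤ) - R) := by
  rw [Ppoly, Polynomial.finset_sum_coeff]
  rw [Finset.sum_eq_single t]
  · simp
  · intro b _ hbt
    rw [Polynomial.coeff_monomial]
    simp [hbt]
  · intro h
    exact absurd (Finset.mem_range.2 (by omega)) h

lemma Ppoly_natDegree_le (R P : ℕ) (a : ℤ → ℂ) : (Ppoly R P a).natDegree ≤ P + R := by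
  apply Polynomial.natDegree_sum_le_of_forall_le
  intro t ht
  exact le_trans (Polynomial.natDegree_monomial_le _) (by
    rw [Finset.mem_range] at ht; omega)

lemma Ppoly_ne_zero (R P : ℕ) (a : ℤ → ℂ) (h : a ((P : ℤ)) ≠ 0) : Ppoly R P a ≠ 0 := by
  intro hz
  apply h
  have hcc := Ppoly_coeff R P a (P + R) (le_refl _)
  have h2 : ((P + R : ℕ) : ℤ) - R = (P : ℤ) := by push_cast; ring
  rw [hz, Polynomial.coeff_zero, h2] at hcc
  exact hcc.symm

lemma aeval_Ppoly_apply (R P : ℕ) (a : ℤ → ℂ) (u : ℤ → ℂ) (j : ℤ) :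
    (Polynomial.aeval shiftL (Ppoly R P a)) u j
      = ∑ t ∈ Finset.range (P + R + 1), a ((t : ℤ) - R) * u (j + t) := by
  rw [Ppoly, map_sum]
  have hs : ((∑ t ∈ Finset.range (P + R + 1),
      Polynomial.aeval shiftL (Polynomial.monomial t (a ((t : ℤ) - R)))) u) j
      = ∑ t ∈ Finset.range (P + R + 1),
        ((Polynomial.aeval shiftL (Polynomial.monomial t (a ((t : ℤ) - R)))) u) j := by
    simp only [LinearMap.coe_sum, Finset.sum_apply]
  rw [hs]
  apply Finset.sum_congr rfl
  intro t _
  rw [Polynomial.aeval_monomial]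
  show ((algebraMap ℂ (Module.End ℂ (ℤ → ℂ)) (a ((t : ℤ) - R))) ((shiftL ^ t) u)) j = _
  rw [Module.algebraMap_end_apply]
  show a ((t : ℤ) - R) * ((shiftL ^ t) u) j = _
  rw [shiftL_pow]

/-! ### convolution operators as linear endomorphisms -/

def convL (r p : ℕ) (a : ℤ → ℂ) : Module.End ℂ (ℤ → ℂ) where
  toFun u := fun j => ∑ ℓ ∈ Finset.Icc (-(r:ℤ)) (p:ℤ), a ℓ * u (j + ℓ)
  map_add' u v := by
    funext j
    simp [mul_add, Finset.sum_add_distrib]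
  map_smul' c u := by
    funext j
    simp only [Pi.smul_apply, smul_eq_mul, RingHom.id_apply, Finset.mul_sum]
    exact Finset.sum_congr rfl fun ℓ _ => by ring

lemma convL_apply (r p : ℕ) (a : ℤ → ℂ) (u : ℤ → ℂ) (j : ℤ) :
    convL r p a u j = ∑ ℓ ∈ Finset.Icc (-(r:ℤ)) (p:ℤ), a ℓ * u (j + ℓ) := rfl

lemma convL_aeval (r p : ℕ) (a : ℤ → ℂ) (u : ℤ → ℂ) (j : ℤ) :
    (Polynomial.aeval shiftL (Ppoly r p a)) u j = convL r p a u (j + r) := by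
  rw [aeval_Ppoly_apply, convL_apply]
  refine Finset.sum_nbij' (fun t => (t : ℤ) - r) (fun ℓ => (ℓ + r).toNat) ?_ ?_ ?_ ?_ ?_
  · intro t ht
    simp only [Finset.mem_range] at ht
    simp only [Finset.mem_Icc]
    omega
  · intro ℓ hℓ
    simp only [Finset.mem_Icc] at hℓ
    simp only [Finset.mem_range]
    omega
  · intro t ht; simp only [Finset.mem_range] at ht; omega
  · intro ℓ hℓ; simp only [Finset.mem_Icc] at hℓ; omega
  · intro t ht
    congr 2
    ring

lemma convL_pow_aeval (r p : ℕ) (a : ℤ → ℂ) (n : ℕ) (u : ℤ → ℂ) (j : ℤ) :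
    (Polynomial.aeval shiftL ((Ppoly r p a) ^ n)) u j
      = ((convL r p a) ^ n) u (j + n * r) := by
  induction n generalizing j with
  | zero => simp
  | succ n ihn =>
      rw [pow_succ', map_mul, Module.End.mul_apply]
      rw [convL_aeval]
      rw [convL_apply]
      have hstep : ∀ ℓ ∈ Finset.Icc (-(r:ℤ)) (p:ℤ),
          a ℓ * ((Polynomial.aeval shiftL ((Ppoly r p a) ^ n)) u) (j + r + ℓ)
          = a ℓ * (((convL r p a) ^ n) u) (j + r + (n:ℤ) * r + ℓ) := by
        intro ℓ _
        rw [ihn (j + r + ℓ)]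
        congr 2
        ring
      rw [Finset.sum_congr rfl hstep]
      have hps : ((convL r p a) ^ (n+1)) u (j + ((n:ℕ)+1 : ℕ) * r)
          = convL r p a (((convL r p a) ^ n) u) (j + ((n:ℕ)+1 : ℕ) * r) := by
        rw [pow_succ', Module.End.mul_apply]
      rw [hps, convL_apply]
      apply Finset.sum_congr rfl
      intro ℓ _
      congr 2
      push_cast
      ring

lemma convL_comm (r p : ℕ) (a b : ℤ → ℂ) :
    convL r p a * convL r p b = convL r p b * convL r p a := by
  apply LinearMap.ext
  intro u
  funext j
  rw [Module.End.mul_apply, Module.End.mul_apply, convL_apply, convL_apply]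
  have h1 : ∀ ℓ ∈ Finset.Icc (-(r:ℤ)) (p:ℤ), a ℓ * (convL r p b u) (j + ℓ)
      = ∑ k ∈ Finset.Icc (-(r:ℤ)) (p:ℤ), a ℓ * (b k * u (j + ℓ + k)) := by
    intro ℓ _
    rw [convL_apply, Finset.mul_sum]
  have h2 : ∀ k ∈ Finset.Icc (-(r:ℤ)) (p:ℤ), b k * (convL r p a u) (j + k)
      = ∑ ℓ ∈ Finset.Icc (-(r:ℤ)) (p:ℤ), b k * (a ℓ * u (j + k + ℓ)) := by
    intro k _
    rw [convL_apply, Finset.mul_sum]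
  rw [Finset.sum_congr rfl h1, Finset.sum_congr rfl h2, Finset.sum_comm]
  apply Finset.sum_congr rfl
  intro k _
  apply Finset.sum_congr rfl
  intro ℓ _
  have hia : j + ℓ + k = j + k + ℓ := by ring
  rw [hia]
  ring

lemma convL_support_up (r p : ℕ) (a : ℤ → ℂ) (u : ℤ → ℂ) (B : ℤ)
    (h : ∀ k, B < k → u k = 0) : ∀ j, B + r < j → convL r p a u j = 0 := by
  intro j hj
  rw [convL_apply]
  apply Finset.sum_eq_zero
  intro ℓ hℓ
  rw [Finset.mem_Icc] at hℓ
  rw [h (j + ℓ) (by omega), mul_zero]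

lemma convL_support_down (r p : ℕ) (a : ℤ → ℂ) (u : ℤ → ℂ) (A : ℤ)
    (h : ∀ k, k < A → u k = 0) : ∀ j, j < A - p → convL r p a u j = 0 := by
  intro j hj
  rw [convL_apply]
  apply Finset.sum_eq_zero
  intro ℓ hℓ
  rw [Finset.mem_Icc] at hℓ
  rw [h (j + ℓ) (by omega), mul_zero]

lemma convL_pow_support_up (r p : ℕ) (a : ℤ → ℂ) (n : ℕ) (u : ℤ → ℂ) (B : ℤ)
    (h : ∀ k, B < k → u k = 0) : ∀ j, B + n * r < j → ((convL r p a) ^ n) u j = 0 := by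
  induction n generalizing u B with
  | zero => intro j hj; simp only [pow_zero, Module.End.one_apply]; exact h j (by omega)
  | succ n ihn =>
      intro j hj
      rw [pow_succ, Module.End.mul_apply]
      have hup := convL_support_up r p a u B h
      have hr : ((n:ℤ)+1)*(r:ℤ) = (r:ℤ) + (n:ℤ)*(r:ℤ) := by ring
      refine ihn (convL r p a u) (B + r) hup j (by push_cast at hj ⊢; linarith [hr])

lemma convL_pow_support_down (r p : ℕ) (a : ℤ → ℂ) (n : ℕ) (u : ℤ → ℂ) (A : ℤ)
    (h : ∀ k, k < A → u k = 0) : ∀ j, j < A - n * p → ((convL r p a) ^ n) u j = 0 := by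
  induction n generalizing u A with
  | zero => intro j hj; simp only [pow_zero, Module.End.one_apply]; exact h j (by omega)
  | succ n ihn =>
      intro j hj
      rw [pow_succ, Module.End.mul_apply]
      have hdn := convL_support_down r p a u A h
      have hr : ((n:ℤ)+1)*(p:ℤ) = (p:ℤ) + (n:ℤ)*(p:ℤ) := by ring
      refine ihn (convL r p a u) (A - p) hdn j (by push_cast at hj ⊢; linarith [hr])

lemma convL_reflect (r p : ℕ) (a : ℤ → ℂ) (u : ℤ → ℂ) (j : ℤ) :
    convL p r (fun ℓ => a (-ℓ)) (fun k => u (-k)) j = convL r p a u (-j) := by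
  rw [convL_apply, convL_apply]
  refine Finset.sum_nbij' (fun ℓ => -ℓ) (fun ℓ => -ℓ) ?_ ?_ ?_ ?_ ?_
  · intro ℓ hℓ; simp only [Finset.mem_Icc] at hℓ ⊢; omega
  · intro ℓ hℓ; simp only [Finset.mem_Icc] at hℓ ⊢; omega
  · intro ℓ _; omega
  · intro ℓ _; omega
  · intro ℓ _
    show a (-ℓ) * u (-(j + ℓ)) = a (-ℓ) * u (-j + -ℓ)
    congr 2
    ring

lemma convL_pow_reflect (r p : ℕ) (a : ℤ → ℂ) (n : ℕ) (u : ℤ → ℂ) (j : ℤ) :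
    ((convL p r (fun ℓ => a (-ℓ))) ^ n) (fun k => u (-k)) j
      = ((convL r p a) ^ n) u (-j) := by
  induction n generalizing j with
  | zero => simp
  | succ n ihn =>
      rw [pow_succ', pow_succ', Module.End.mul_apply, Module.End.mul_apply]
      have hfun : ((convL p r (fun ℓ => a (-ℓ))) ^ n) (fun k => u (-k))
          = fun k => (((convL r p a) ^ n) u) (-k) := by
        funext k
        exact ihn k
      rw [hfun]
      exact convL_reflect r p a (((convL r p a) ^ n) u) j

lemma Ppoly_eval_symbol (r p : ℕ) (a : ℤ → ℂ) (z : ℂ) (hz : z ≠ 0) :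
    (Ppoly r p a).eval z = z ^ (r:ℕ) * symbol r p a z := by
  have he : (Ppoly r p a).eval z
      = ∑ t ∈ Finset.range (p + r + 1), a ((t : ℤ) - r) * z ^ t := by
    rw [Ppoly, Polynomial.eval_finset_sum]
    exact Finset.sum_congr rfl fun t _ => Polynomial.eval_monomial
  rw [he, symbol, Finset.mul_sum]
  refine Finset.sum_nbij' (fun t => (t : ℤ) - r) (fun ℓ => (ℓ + r).toNat) ?_ ?_ ?_ ?_ ?_
  · intro t ht; simp only [Finset.mem_range] at ht; simp only [Finset.mem_Icc]; omega
  · intro ℓ hℓ; simp only [Finset.mem_Icc] at hℓ; simp only [Finset.mem_range]; omega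
  · intro t ht; simp only [Finset.mem_range] at ht; omega
  · intro ℓ hℓ; simp only [Finset.mem_Icc] at hℓ; omega
  · intro t ht
    simp only [Finset.mem_range] at ht
    have h2 : z ^ ((t:ℤ)) = z ^ ((r:ℤ)) * z ^ ((t:ℤ) - (r:ℤ)) := by
      rw [← zpow_add₀ hz]
      congr 1
      ring
    calc a ((t:ℤ) - r) * z ^ t = a ((t:ℤ) - r) * z ^ ((t:ℤ)) := by rw [zpow_natCast]
      _ = z ^ ((r:ℤ)) * (a ((t:ℤ) - r) * z ^ ((t:ℤ) - (r:ℤ))) := by rw [h2]; ring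
      _ = z ^ (r:ℕ) * (a ((t:ℤ) - r) * z ^ ((t:ℤ) - (r:ℤ))) := by rw [zpow_natCast]

lemma symbol_reflect (r p : ℕ) (a : ℤ → ℂ) (z : ℂ) (hz : z ≠ 0) :
    symbol p r (fun ℓ => a (-ℓ)) z = symbol r p a z⁻¹ := by
  rw [symbol, symbol]
  refine Finset.sum_nbij' (fun ℓ => -ℓ) (fun ℓ => -ℓ) ?_ ?_ ?_ ?_ ?_
  · intro ℓ hℓ; simp only [Finset.mem_Icc] at hℓ ⊢; omega
  · intro ℓ hℓ; simp only [Finset.mem_Icc] at hℓ ⊢; omega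
  · intro ℓ _; omega
  · intro ℓ _; omega
  · intro ℓ _
    show a (-ℓ) * z ^ ℓ = a (-ℓ) * (z⁻¹) ^ (-ℓ)
    rw [zpow_neg, inv_zpow, inv_inv]

/-! ### the half-line decay lemma -/

lemma half_line_decay (R P : ℕ) (b : ℤ → ℂ)
    (hbP : b (P:ℤ) ≠ 0)
    (heval : ∀ z : ℂ, ‖z‖ = 1 → ¬ (Ppoly R P b).IsRoot z) :
    ∃ ρ : ℝ, 0 < ρ ∧ ρ < 1 ∧ ∃ K : ℝ, 1 ≤ K ∧
      ∀ (n : ℕ) (y : ℤ → ℂ) (M : ℝ), (∀ j, ‖y j‖ ≤ M) →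
      (∀ j : ℤ, 1 ≤ j → ((convL R P b) ^ n) y (j + n * R) = 0) →
      ∀ j : ℤ, 1 ≤ j → ‖y j‖ ≤ K ^ n * M * ρ ^ (j - 1).toNat := by
  classical
  set Pb : ℂ[X] := Ppoly R P b with hPb
  have hPb0 : Pb ≠ 0 := Ppoly_ne_zero R P b hbP
  set S₁ : Finset ℂ := Pb.roots.toFinset with hS₁
  have hroot_ne1 : ∀ z ∈ S₁, ‖z‖ ≠ 1 := by
    intro z hz h1
    rw [hS₁, Multiset.mem_toFinset, Polynomial.mem_roots hPb0] at hz
    exact heval z h1 hz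
  set rin : ℝ := Finset.fold max (1/2) (fun z => ‖z‖) (S₁.filter (fun z => ‖z‖ < 1)) with hrin
  set σv : ℝ := Finset.fold min 2 (fun z => ‖z‖) (S₁.filter (fun z => 1 < ‖z‖)) with hσv
  set Zv : ℝ := Finset.fold max 1 (fun z => ‖z‖) S₁ with hZv
  have hrin_half : (1/2 : ℝ) ≤ rin := by
    rw [hrin, Finset.le_fold_max]; left; exact le_refl _
  have hrin0 : (0:ℝ) ≤ rin := by linarith
  have hrin1 : rin < 1 := by
    rw [hrin, Finset.fold_max_lt]
    constructor
    · norm_num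
    · intro x hx
      rw [Finset.mem_filter] at hx
      exact hx.2
  have hrin_mem : ∀ z ∈ S₁, ‖z‖ < 1 → ‖z‖ ≤ rin := by
    intro z hz hlt
    rw [hrin, Finset.le_fold_max]
    right
    exact ⟨z, Finset.mem_filter.2 ⟨hz, hlt⟩, le_refl _⟩
  have hσ1 : 1 < σv := by
    rw [hσv, Finset.lt_fold_min]
    constructor
    · norm_num
    · intro x hx
      rw [Finset.mem_filter] at hx
      exact hx.2
  have hσ_mem : ∀ z ∈ S₁, 1 < ‖z‖ → σv ≤ ‖z‖ := by
    intro z hz hlt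
    rw [hσv, Finset.fold_min_le]
    right
    exact ⟨z, Finset.mem_filter.2 ⟨hz, hlt⟩, le_refl _⟩
  have hZ1 : (1:ℝ) ≤ Zv := by
    rw [hZv, Finset.le_fold_max]; left; exact le_refl _
  have hZ_mem : ∀ z ∈ S₁, ‖z‖ ≤ Zv := by
    intro z hz
    rw [hZv, Finset.le_fold_max]
    right
    exact ⟨z, hz, le_refl _⟩
  set ρs : ℝ := (1 + rin)/2 with hρs
  have hrρ : rin < ρs := by rw [hρs]; linarith
  have hρ1 : ρs < 1 := by rw [hρs]; linarith
  have hρ0 : 0 < ρs := by rw [hρs]; linarith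
  set K₀ : ℝ := max (max 1 (σv - ρs)⁻¹) (ρs - rin)⁻¹ with hK₀
  have hK₀1 : 1 ≤ K₀ := le_trans (le_max_left _ _) (le_max_left _ _)
  have hK₀σ : (σv - ρs)⁻¹ ≤ K₀ := le_trans (le_max_right _ _) (le_max_left _ _)
  have hK₀ρ : (ρs - rin)⁻¹ ≤ K₀ := le_max_right _ _
  refine ⟨ρs, hρ0, hρ1, (K₀ * (1 + Zv)) ^ (P + R), ?_, ?_⟩
  · have h1 : (1:ℝ) ≤ K₀ * (1 + Zv) := by nlinarith
    exact one_le_pow₀ h1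
  intro n y M hy hzero j hj
  have hM0 : 0 ≤ M := le_trans (norm_nonneg _) (hy 0)
  set l : List ℂ := (Pb ^ n).roots.toList with hl
  have hlmem : ∀ z ∈ l, z ∈ S₁ := by
    intro z hz
    rw [hl, Multiset.mem_toList, Polynomial.roots_pow, Multiset.mem_nsmul] at hz
    rw [hS₁, Multiset.mem_toFinset]
    exact hz.2
  have hlen : l.length ≤ n * (P + R) := by
    rw [hl, Multiset.length_toList]
    calc Multiset.card (Pb ^ n).roots ≤ (Pb ^ n).natDegree := Polynomial.card_roots' _
      _ ≤ n * Pb.natDegree := Polynomial.natDegree_pow_le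
      _ ≤ n * (P + R) := Nat.mul_le_mul_left n (Ppoly_natDegree_le R P b)
  have hPbn0 : Pb ^ n ≠ 0 := pow_ne_zero n hPb0
  have hlead0 : (Pb ^ n).leadingCoeff ≠ 0 := Polynomial.leadingCoeff_ne_zero.2 hPbn0
  have hfact : Pb ^ n = Polynomial.C (Pb ^ n).leadingCoeff
      * (l.map (fun z => X - C z)).prod := by
    have hsp := Polynomial.Splits.eq_prod_roots
      (IsAlgClosed.splits (Pb ^ n))
    conv_lhs => rw [hsp]
    congr 1
    rw [hl]
    conv_lhs => rw [← Multiset.coe_toList (Pb ^ n).roots]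
    rw [Multiset.map_coe, Multiset.prod_coe]
  have hvanish : ∀ k : ℤ, 1 ≤ k → prodOp l y k = 0 := by
    intro k hk
    have h1 : (Polynomial.aeval shiftL (Pb ^ n)) y k = 0 := by
      rw [hPb, convL_pow_aeval]
      exact hzero k hk
    rw [hfact] at h1
    rw [map_mul] at h1
    have h2 : (Polynomial.aeval shiftL (Polynomial.C (Pb ^ n).leadingCoeff)
        * Polynomial.aeval shiftL ((l.map (fun z => X - C z)).prod)) y k
        = (Pb ^ n).leadingCoeff * ((Polynomial.aeval shiftL
            ((l.map (fun z => X - C z)).prod)) y) k := by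
      rw [Module.End.mul_apply, Polynomial.aeval_C, Module.algebraMap_end_apply]
      rfl
    rw [h2] at h1
    rcases mul_eq_zero.1 h1 with h3 | h3
    · exact absurd h3 hlead0
    · rw [prodOp_eq_aeval]
      exact h3
  have hdec : ∀ k : ℤ, (1:ℤ) ≤ k → ‖prodOp l y k‖ ≤ 0 * ρs ^ (k - 1).toNat := by
    intro k hk
    rw [hvanish k hk]
    simp
  have hcond : ∀ z ∈ l, ‖z‖ ≤ Zv ∧ (‖z‖ ≤ rin ∨ σv ≤ ‖z‖) := by
    intro z hz
    have hzS := hlmem z hz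
    refine ⟨hZ_mem z hzS, ?_⟩
    rcases lt_or_ge ‖z‖ 1 with h | h
    · left; exact hrin_mem z hzS h
    · right
      apply hσ_mem z hzS
      rcases lt_or_eq_of_le h with h' | h'
      · exact h'
      · exact absurd h'.symm (hroot_ne1 z hzS)
  have hmain := list_decay rin ρs σv Zv K₀ hrin0 hrρ hρ1 hσ1 hZ1 hK₀1 hK₀σ hK₀ρ
    l hcond y M hy 1 0 (le_refl 0) hdec j hj
  refine le_trans hmain ?_
  apply mul_le_mul_of_nonneg_right _ (by positivity)
  rw [zero_add]
  have hbase1 : (1:ℝ) ≤ K₀ * (1 + Zv) := by nlinarith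
  calc K₀ ^ l.length * ((1 + Zv) ^ l.length * M)
      = (K₀ * (1 + Zv)) ^ l.length * M := by rw [mul_pow]; ring
    _ ≤ (K₀ * (1 + Zv)) ^ (n * (P + R)) * M := by
        apply mul_le_mul_of_nonneg_right _ hM0
        exact pow_le_pow_right₀ hbase1 hlen
    _ = ((K₀ * (1 + Zv)) ^ (P + R)) ^ n * M := by rw [← pow_mul, Nat.mul_comm]

lemma pow_eq_exp (ρ : ℝ) (hρ : 0 < ρ) (k : ℕ) : ρ ^ k = Real.exp (k * Real.log ρ) := by
  conv_lhs => rw [← Real.exp_log hρ]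
  rw [← Real.exp_nat_mul]

end TG

set_option maxHeartbeats 2000000 in
/-- Lemma 10: in the implicit case with `K = 1`, there is `L ≥ max(p, r)` such that for
`|j| > nL` the temporal Green's function satisfies `|𝒢ⁿ_j| ≤ C e^{-c|j|}`. -/
theorem temporal_green_implicit_far_bound
    (r p : ℕ) (hrp : 1 ≤ p + r) (a0 a1 : ℤ → ℂ)
    (α β : ℝ) (μ : ℕ) (hα : 0 < α) (hβ : 0 < β) (hμ : 1 ≤ μ)
    (L : Seq2 →L[ℂ] Seq2)
    -- Assumption 1
    (hQ1_ne : ∀ κ : ℂ, ‖κ‖ = 1 → symbol r p a1 κ ≠ 0)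
    (hQ1_index : (2 * (Real.pi : ℂ) * Complex.I)⁻¹ *
      (∮ κ in C(0, 1), deriv (symbol r p a1) κ / symbol r p a1 κ) = 0)
    -- `ℒ = Q₁⁻¹ Q₀` is characterized by `Q₁ ∘ ℒ = Q₀`
    (hL : ∀ (u : Seq2) (j : ℤ),
      convAct r p a1 (fun i => L u i) j = convAct r p a0 (fun i => u i) j)
    -- implicit case: `Q₁` is not the identity, so `a_{-r,1} ≠ 0` and `a_{p,1} ≠ 0`
    (hnotid : ¬ ∀ ℓ ∈ Finset.Icc (-(r : ℤ)) (p : ℤ), a1 ℓ = if ℓ = 0 then 1 else 0)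
    (har : a1 (-(r : ℤ)) ≠ 0) (hap : a1 (p : ℤ) ≠ 0)
    -- Assumption 2 specialized to `K = 1`, `κ̲₁ = 1`, `z̲₁ = F(1) = 1`
    (hF1 : Fsym r p a0 a1 1 = 1)
    (hFlt : ∀ κ : ℂ, ‖κ‖ = 1 → κ ≠ 1 → ‖Fsym r p a0 a1 κ‖ < 1)
    (hexp : ∃ g : ℝ → ℂ, (g =O[nhds 0] fun ξ : ℝ => ξ ^ (2 * μ + 1)) ∧
      ∀ᶠ ξ : ℝ in nhds 0, Fsym r p a0 a1 (Complex.exp (Complex.I * ξ)) =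
        Complex.exp (-(Complex.I) * (α : ℂ) * (ξ : ℂ)
          - (β : ℂ) * (ξ : ℂ) ^ (2 * μ) + g ξ))
    -- Assumption 3
    (hA : ∀ z : ℂ, 1 ≤ ‖z‖ → Acoef a0 a1 (-(r : ℤ)) z ≠ 0 ∧ Acoef a0 a1 (p : ℤ) z ≠ 0)
    : ∃ LL : ℝ, max (p : ℝ) (r : ℝ) ≤ LL ∧ ∃ C > (0 : ℝ), ∃ c > (0 : ℝ),
      ∀ n : ℕ, 1 ≤ n → ∀ j : ℤ, (n : ℝ) * LL < |(j : ℝ)| →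
      ‖((L ^ n) dirac) j‖ ≤ C * Real.exp (-c * |(j : ℝ)|) := by
  classical
  -- the two one-sided decay estimates
  have heval1 : ∀ z : ℂ, ‖z‖ = 1 → ¬ (TG.Ppoly r p a1).IsRoot z := by
    intro z hz hroot
    have hz0 : z ≠ 0 := by
      intro h; rw [h] at hz; simp at hz
    have he := TG.Ppoly_eval_symbol r p a1 z hz0
    rw [Polynomial.IsRoot] at hroot
    have hmul : z ^ (r:ℕ) * symbol r p a1 z = 0 := by rw [← he]; exact hroot
    rcases mul_eq_zero.1 hmul with h | h
    · exact pow_ne_zero _ hz0 h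
    · exact hQ1_ne z hz h
  have heval2 : ∀ z : ℂ, ‖z‖ = 1 → ¬ (TG.Ppoly p r (fun ℓ => a1 (-ℓ))).IsRoot z := by
    intro z hz hroot
    have hz0 : z ≠ 0 := by
      intro h; rw [h] at hz; simp at hz
    have he := TG.Ppoly_eval_symbol p r (fun ℓ => a1 (-ℓ)) z hz0
    rw [Polynomial.IsRoot] at hroot
    have hmul : z ^ (p:ℕ) * symbol p r (fun ℓ => a1 (-ℓ)) z = 0 := by rw [← he]; exact hroot
    rcases mul_eq_zero.1 hmul with h | h
    · exact pow_ne_zero _ hz0 h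
    · rw [TG.symbol_reflect r p a1 z hz0] at h
      have hnz : ‖z⁻¹‖ = 1 := by rw [norm_inv, hz]; norm_num
      exact hQ1_ne z⁻¹ hnz h
  have hbP2 : (fun ℓ => a1 (-ℓ)) ((r:ℕ) : ℤ) ≠ 0 := by
    show a1 (-(r:ℤ)) ≠ 0
    exact har
  obtain ⟨ρ₁, hρ₁0, hρ₁1, K₁, hK₁, Hside1⟩ := TG.half_line_decay r p a1 hap heval1
  obtain ⟨ρ₂, hρ₂0, hρ₂1, K₂, hK₂, Hside2⟩ :=
    TG.half_line_decay p r (fun ℓ => a1 (-ℓ)) hbP2 heval2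
  -- uniform constants
  set ρ : ℝ := max ρ₁ ρ₂ with hρ
  have hρ0 : 0 < ρ := lt_of_lt_of_le hρ₁0 (le_max_left _ _)
  have hρ1 : ρ < 1 := max_lt hρ₁1 hρ₂1
  set Kc : ℝ := max K₁ K₂ with hKc
  have hKc1 : 1 ≤ Kc := le_trans hK₁ (le_max_left _ _)
  set Λ : ℝ := max 1 ‖L‖ with hΛ
  have hΛ1 : (1:ℝ) ≤ Λ := le_max_left _ _
  set E : ℝ := ‖dirac‖ with hE
  have hE0 : 0 ≤ E := norm_nonneg _
  -- pointwise bound on the Green's function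
  have hGn : ∀ n : ℕ, ‖(L ^ n) dirac‖ ≤ Λ ^ n * E := by
    intro n
    induction n with
    | zero => simp; exact le_rfl
    | succ n ih =>
        have hps : (L ^ (n+1)) dirac = L ((L ^ n) dirac) := by
          rw [pow_succ']; rfl
        rw [hps]
        calc ‖L ((L ^ n) dirac)‖ ≤ ‖L‖ * ‖(L ^ n) dirac‖ := L.le_opNorm _
          _ ≤ Λ * (Λ ^ n * E) := by
              apply mul_le_mul (le_max_right _ _) ih (norm_nonneg _) (by positivity)
          _ = Λ ^ (n+1) * E := by rw [pow_succ]; ring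
  have hMb : ∀ n : ℕ, ∀ j : ℤ, ‖((L ^ n) dirac) j‖ ≤ Λ ^ n * E := by
    intro n j
    exact le_trans (lp.norm_apply_le_norm (by norm_num) ((L ^ n) dirac) j) (hGn n)
  -- the fundamental identity  Q₁ⁿ 𝒢ⁿ = Q₀ⁿ δ
  set G : ℕ → ℤ → ℂ := fun n j => ((L ^ n) dirac) j with hG
  have Hn : ∀ n : ℕ, ((TG.convL r p a1) ^ n) (G n) = ((TG.convL r p a0) ^ n) (G 0) := by
    intro n
    induction n with
    | zero => simp
    | succ n ih =>
        have hstep : TG.convL r p a1 (G (n+1)) = TG.convL r p a0 (G n) := by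
          funext j
          have hps : G (n+1) = fun i => (L ((L ^ n) dirac)) i := by
            funext i
            show ((L ^ (n+1)) dirac) i = _
            rw [pow_succ']
            rfl
          rw [hps]
          exact hL ((L ^ n) dirac) j
        have hcm : Commute (TG.convL r p a1) (TG.convL r p a0) := TG.convL_comm r p a1 a0
        have hcomm : (TG.convL r p a1) ^ n * TG.convL r p a0
            = TG.convL r p a0 * (TG.convL r p a1) ^ n :=
          (hcm.pow_left n).eq
        calc ((TG.convL r p a1) ^ (n+1)) (G (n+1))
            = ((TG.convL r p a1) ^ n) (TG.convL r p a1 (G (n+1))) := by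
              rw [pow_succ, Module.End.mul_apply]
          _ = ((TG.convL r p a1) ^ n) (TG.convL r p a0 (G n)) := by rw [hstep]
          _ = (((TG.convL r p a1) ^ n) * TG.convL r p a0) (G n) := by
              rw [Module.End.mul_apply]
          _ = (TG.convL r p a0 * ((TG.convL r p a1) ^ n)) (G n) := by rw [hcomm]
          _ = TG.convL r p a0 (((TG.convL r p a1) ^ n) (G n)) := by
              rw [Module.End.mul_apply]
          _ = TG.convL r p a0 (((TG.convL r p a0) ^ n) (G 0)) := by rw [ih]
          _ = ((TG.convL r p a0) ^ (n+1)) (G 0) := by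
              rw [pow_succ', Module.End.mul_apply]
  -- support of the Dirac mass
  have hδup : ∀ k : ℤ, (0:ℤ) < k → G 0 k = 0 := by
    intro k hk
    show (dirac : Seq2) k = 0
    rw [dirac, lp.single_apply]
    have : k ≠ 0 := by omega
    simp [this]
  have hδdown : ∀ k : ℤ, k < (0:ℤ) → G 0 k = 0 := by
    intro k hk
    show (dirac : Seq2) k = 0
    rw [dirac, lp.single_apply]
    have : k ≠ 0 := by omega
    simp [this]
  -- the vanishing hypotheses for both sides
  have hzero1 : ∀ n : ℕ, ∀ j : ℤ, 1 ≤ j →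
      ((TG.convL r p a1) ^ n) (G n) (j + n * r) = 0 := by
    intro n j hj
    rw [Hn n]
    refine TG.convL_pow_support_up r p a0 n (G 0) 0 hδup (j + n * r) ?_
    have : (0:ℤ) < j := hj
    linarith
  have hzero2 : ∀ n : ℕ, ∀ j : ℤ, 1 ≤ j →
      ((TG.convL p r (fun ℓ => a1 (-ℓ))) ^ n) (fun k => G n (-k)) (j + n * p) = 0 := by
    intro n j hj
    rw [TG.convL_pow_reflect r p a1 n (G n) (j + n * p), Hn n]
    refine TG.convL_pow_support_down r p a0 n (G 0) 0 hδdown (-(j + n * p)) ?_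
    have : (0:ℤ) < j := hj
    linarith
  -- the one-sided bounds, in uniform constants
  have hbound : ∀ n : ℕ, ∀ j : ℤ, 1 ≤ j →
      ‖G n j‖ ≤ (Kc * Λ) ^ n * E * ρ ^ (j - 1).toNat ∧
      ‖G n (-j)‖ ≤ (Kc * Λ) ^ n * E * ρ ^ (j - 1).toNat := by
    intro n j hj
    have hMn : ∀ k : ℤ, ‖G n k‖ ≤ Λ ^ n * E := fun k => hMb n k
    have hMn' : ∀ k : ℤ, ‖(fun k => G n (-k)) k‖ ≤ Λ ^ n * E := fun k => hMb n (-k)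
    have hb1 := Hside1 n (G n) (Λ ^ n * E) hMn (hzero1 n) j hj
    have hb2 := Hside2 n (fun k => G n (-k)) (Λ ^ n * E) hMn' (hzero2 n) j hj
    have hcommon : ∀ (Kx ρx : ℝ), 1 ≤ Kx → Kx ≤ Kc → 0 < ρx → ρx ≤ ρ →
        Kx ^ n * (Λ ^ n * E) * ρx ^ (j - 1).toNat
          ≤ (Kc * Λ) ^ n * E * ρ ^ (j - 1).toNat := by
      intro Kx ρx hKx1 hKxc hρx0 hρxρ
      have h1 : Kx ^ n * (Λ ^ n * E) = (Kx * Λ) ^ n * E := by rw [mul_pow]; ring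
      rw [h1]
      apply mul_le_mul
      · apply mul_le_mul_of_nonneg_right _ hE0
        apply pow_le_pow_left₀ (by positivity)
        exact mul_le_mul_of_nonneg_right hKxc (by positivity)
      · apply pow_le_pow_left₀ (le_of_lt hρx0) hρxρ
      · positivity
      · positivity
    constructor
    · exact le_trans hb1 (hcommon K₁ ρ₁ hK₁ (le_max_left _ _) hρ₁0 (le_max_left _ _))
    · exact le_trans hb2 (hcommon K₂ ρ₂ hK₂ (le_max_right _ _) hρ₂0 (le_max_right _ _))
  -- final numeric bookkeeping
  set c0 : ℝ := -Real.log ρ with hc0def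
  have hc0 : 0 < c0 := by
    have := Real.log_neg hρ0 hρ1
    rw [hc0def]; linarith
  set A : ℝ := Real.log (Kc * Λ) with hAdef
  have hA0 : 0 ≤ A := Real.log_nonneg (by nlinarith)
  set LL : ℝ := max (max (p : ℝ) (r : ℝ)) (max 1 (2 * A / c0)) with hLL
  have hLL1 : (1:ℝ) ≤ LL := le_trans (le_max_left _ _) (le_max_right _ _)
  have hLLA : 2 * A / c0 ≤ LL := le_trans (le_max_right _ _) (le_max_right _ _)
  have hLL0 : 0 < LL := by linarith
  refine ⟨LL, le_max_left _ _, E * Real.exp c0 + 1, by positivity, c0 / 2, by positivity, ?_⟩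
  intro n hn j hj
  have hn1 : (1:ℝ) ≤ (n:ℝ) := by exact_mod_cast hn
  have habs1 : 1 ≤ |(j:ℝ)| := by nlinarith
  have hKΛ0 : (0:ℝ) < Kc * Λ := by nlinarith
  -- bound `‖G n j‖ ≤ (Kc Λ)^n E ρ^(|j| - 1)`
  have hmain : ‖G n j‖ ≤ (Kc * Λ) ^ n * E * ρ ^ (|j| - 1).toNat := by
    rcases le_or_gt 1 j with h | h
    · have := (hbound n j h).1
      rwa [abs_of_nonneg (by omega : (0:ℤ) ≤ j)]
    · have hj1 : 1 ≤ -j := by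
        by_contra hcon
        push_neg at hcon
        have : j = 0 := by omega
        rw [this] at habs1
        simp at habs1
        linarith
      have hb := (hbound n (-j) hj1).2
      rw [neg_neg] at hb
      have habsj : |j| = -j := abs_of_neg (by omega)
      rwa [habsj]
  -- convert to the exponential form
  have habsZ : (1:ℤ) ≤ |j| := by
    have h' : (1:ℝ) ≤ |(j:ℝ)| := habs1
    rw [← Int.cast_abs] at h'
    exact_mod_cast h'
  have hcast : ((|j| - 1).toNat : ℝ) = |(j:ℝ)| - 1 := by
    have h2 : ((|j| - 1).toNat : ℤ) = |j| - 1 := Int.toNat_of_nonneg (by omega)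
    calc (((|j| - 1).toNat : ℕ) : ℝ) = (((|j| - 1).toNat : ℤ) : ℝ) := by push_cast; ring
      _ = ((|j| - 1 : ℤ) : ℝ) := by rw [h2]
      _ = |(j:ℝ)| - 1 := by push_cast [Int.cast_abs]; ring
  have hρpow : ρ ^ (|j| - 1).toNat = Real.exp ((|(j:ℝ)| - 1) * Real.log ρ) := by
    rw [TG.pow_eq_exp ρ hρ0, hcast]
  have hKpow : (Kc * Λ) ^ n = Real.exp ((n:ℝ) * A) := by
    rw [TG.pow_eq_exp _ hKΛ0, hAdef]
  have hexp_le : (n:ℝ) * A ≤ (c0/2) * |(j:ℝ)| := by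
    have hnle : (n:ℝ) ≤ |(j:ℝ)| / LL := by
      rw [le_div_iff₀ hLL0]
      linarith
    have h1 : (n:ℝ) * A ≤ (|(j:ℝ)| / LL) * A := by
      apply mul_le_mul_of_nonneg_right hnle hA0
    have h2 : A / LL ≤ c0 / 2 := by
      rw [div_le_iff₀ hc0] at hLLA
      rw [div_le_iff₀ hLL0]
      nlinarith
    calc (n:ℝ) * A ≤ (|(j:ℝ)| / LL) * A := h1
      _ = (A / LL) * |(j:ℝ)| := by ring
      _ ≤ (c0/2) * |(j:ℝ)| := by
          apply mul_le_mul_of_nonneg_right h2 (abs_nonneg _)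
  calc ‖((L ^ n) dirac) j‖ = ‖G n j‖ := rfl
    _ ≤ (Kc * Λ) ^ n * E * ρ ^ (|j| - 1).toNat := hmain
    _ = E * Real.exp ((n:ℝ) * A + (|(j:ℝ)| - 1) * Real.log ρ) := by
        rw [hρpow, hKpow, Real.exp_add]
        ring
    _ ≤ E * Real.exp (c0 - (c0/2) * |(j:ℝ)|) := by
        apply mul_le_mul_of_nonneg_left _ hE0
        apply Real.exp_le_exp.2
        have hlog : Real.log ρ = -c0 := by rw [hc0def]; ring
        rw [hlog]
        nlinarith
    _ = (E * Real.exp c0) * Real.exp (-(c0/2) * |(j:ℝ)|) := by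
        rw [mul_assoc, ← Real.exp_add]
        ring_nf
    _ ≤ (E * Real.exp c0 + 1) * Real.exp (-(c0/2) * |(j:ℝ)|) := by
        apply mul_le_mul_of_nonneg_right _ (le_of_lt (Real.exp_pos _))
        linarith
end
end
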